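/- arXiv:2210.02972 — 6 statements merged into one kernel-verified Lean document; each statement's English description precedes it below -/
import Mathlib

section
/- For every prime p, a group of order p³ has at most 2p² + 2p + 4 subgroups. -/
open Subgroup Finset

section Aux

variable {p : ℕ} {P : Type*} [Group P]

private lemma cancel_aux (hp : p.Prime) {n : ℕ} (h : n * (p - 1) ≤ p ^ 3 - 1) :
    n ≤ p ^ 2 + p + 1 := by
  obtain ⟨q, rfl⟩ : ∃ q, p = q + 1 := ⟨p - 1, (Nat.succ_pred_eq_of_pos hp.pos).symm⟩
  have hq : 1 ≤ q := by have := hp.two_le; omega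
  have h3 : (q + 1) ^ 3 - 1 = ((q + 1) ^ 2 + (q + 1) + 1) * q := by
    have : ((q + 1) ^ 2 + (q + 1) + 1) * q + 1 = (q + 1) ^ 3 := by ring
    omega
  rw [h3] at h
  simpa using Nat.le_of_mul_le_mul_right (by simpa using h) hq

private lemma zpowers_eq_aux (hp : p.Prime) [Finite P] {H : Subgroup P} (hH : Nat.card H = p)
    {x : P} (hx : x ∈ H) (hx1 : x ≠ 1) : zpowers x = H := by
  have hle : zpowers x ≤ H := zpowers_le.mpr hx
  have hdvd : Nat.card (zpowers x) ∣ p := hH ▸ Subgroup.card_dvd_of_le hle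
  have hne : Nat.card (zpowers x) ≠ 1 := by
    rw [Nat.card_zpowers]
    simpa [orderOf_eq_one_iff] using hx1
  have hcard : Nat.card (zpowers x) = p := ((Nat.dvd_prime hp).mp hdvd).resolve_left hne
  exact Subgroup.eq_of_le_of_card_ge hle ((hH.trans hcard.symm).le)

private lemma card_grow_aux (hp : p.Prime) [Finite P] (hP : Nat.card P = p ^ 3)
    {H K : Subgroup P} (hle : H ≤ K) (hne : H ≠ K) : Nat.card H * p ≤ Nat.card K := by
  obtain ⟨i, hi3, hi⟩ := (Nat.dvd_prime_pow hp).mp (hP ▸ Subgroup.card_subgroup_dvd_card H)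
  obtain ⟨j, hj3, hj⟩ := (Nat.dvd_prime_pow hp).mp (hP ▸ Subgroup.card_subgroup_dvd_card K)
  have hlt : Nat.card H < Nat.card K :=
    lt_of_le_of_ne (Subgroup.card_le_of_le hle)
      (fun h => hne (Subgroup.eq_of_le_of_card_ge hle h.ge))
  rw [hi, hj] at hlt ⊢
  have hij : i < j := by
    by_contra hc
    exact absurd (Nat.pow_le_pow_right hp.pos (le_of_not_gt hc)) (not_le.mpr hlt)
  calc p ^ i * p = p ^ (i + 1) := by ring
    _ ≤ p ^ j := Nat.pow_le_pow_right hp.pos hij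

private lemma exists_three_gens (hp : p.Prime) [Finite P] (hP : Nat.card P = p ^ 3) :
    ∃ a b c : P, Subgroup.closure {a, b, c} = ⊤ := by
  have hnt : Nontrivial P := by
    rw [← Finite.one_lt_card_iff_nontrivial, hP]
    exact Nat.one_lt_pow (by norm_num) hp.one_lt
  obtain ⟨a, ha⟩ := exists_ne (1 : P)
  set H1 := Subgroup.closure ({a} : Set P) with hH1
  have haH1 : a ∈ H1 := subset_closure rfl
  have hb1 : (⊥ : Subgroup P) ≠ H1 := by
    intro h
    exact ha (by simpa using (h ▸ haH1 : a ∈ (⊥ : Subgroup P)))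
  have hcard1 : p ≤ Nat.card H1 := by
    have := card_grow_aux hp hP bot_le hb1
    simpa [Subgroup.card_bot] using this
  by_cases h1 : H1 = ⊤
  · exact ⟨a, a, a, by simpa using h1⟩
  obtain ⟨b, hb⟩ : ∃ b, b ∉ H1 := by
    by_contra hc
    push_neg at hc
    exact h1 (Subgroup.eq_top_iff' H1 |>.mpr hc)
  set H2 := Subgroup.closure ({a, b} : Set P) with hH2
  have h12 : H1 ≤ H2 := Subgroup.closure_mono (by simp)
  have h12ne : H1 ≠ H2 := by
    intro h
    exact hb (h ▸ subset_closure (by simp))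
  have hcard2 : p * p ≤ Nat.card H2 :=
    le_trans (Nat.mul_le_mul_right p hcard1) (card_grow_aux hp hP h12 h12ne)
  by_cases h2 : H2 = ⊤
  · exact ⟨a, b, b, by simpa using h2⟩
  obtain ⟨c, hc⟩ : ∃ c, c ∉ H2 := by
    by_contra hcc
    push_neg at hcc
    exact h2 (Subgroup.eq_top_iff' H2 |>.mpr hcc)
  set H3 := Subgroup.closure ({a, b, c} : Set P) with hH3
  have h23 : H2 ≤ H3 := Subgroup.closure_mono (by intro x hx; simp at hx; rcases hx with h|h <;> simp [h])
  have h23ne : H2 ≠ H3 := by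
    intro h
    exact hc (h ▸ subset_closure (by simp))
  have hcard3 : p ^ 3 ≤ Nat.card H3 := by
    have := le_trans (Nat.mul_le_mul_right p hcard2) (card_grow_aux hp hP h23 h23ne)
    calc p ^ 3 = p * p * p := by ring
      _ ≤ Nat.card H3 := this
  refine ⟨a, b, c, Subgroup.eq_top_of_card_eq _ ?_⟩
  rw [hP]
  exact le_antisymm (hP ▸ Subgroup.card_le_card_group H3) hcard3

private abbrev MM (p : ℕ) : Type := Multiplicative (ZMod p)

private lemma exists_ker_eq (hp : p.Prime) [Finite P] (hP : Nat.card P = p ^ 3)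
    {H : Subgroup P} (hH : Nat.card H = p ^ 2) :
    ∃ f : P →* MM p, f.ker = H := by
  have : Fact p.Prime := ⟨hp⟩
  have hindex : H.index = p := by
    have h := Subgroup.card_mul_index H
    rw [hH, hP] at h
    have h' : p ^ 2 * H.index = p ^ 2 * p := by rw [h]; ring
    exact Nat.eq_of_mul_eq_mul_left (pow_pos hp.pos 2) h'
  have hHne : H ≠ ⊤ := by
    intro h
    rw [h, Subgroup.index_top] at hindex
    have := hp.two_le
    omega
  have hcoatom : IsCoatom H := by
    refine ⟨hHne, fun K hK => ?_⟩
    have h1 : Nat.card H * p ≤ Nat.card K := card_grow_aux hp hP hK.le hK.ne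
    rw [hH] at h1
    apply Subgroup.eq_top_of_card_eq
    rw [hP]
    refine le_antisymm (hP ▸ Subgroup.card_le_card_group K) ?_
    calc p ^ 3 = p ^ 2 * p := by ring
      _ ≤ Nat.card K := h1
  haveI hnil : Group.IsNilpotent P := (IsPGroup.of_card hP).isNilpotent
  haveI hnormal : H.Normal :=
    NormalizerCondition.normal_of_coatom H normalizerCondition_of_isNilpotent hcoatom
  have hq : Nat.card (P ⧸ H) = p := by rw [← Subgroup.index_eq_card]; exact hindex
  have hM : Nat.card (Multiplicative (ZMod p)) = p := by
    rw [Nat.card_congr Multiplicative.toAdd, Nat.card_zmod]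
  let φ : (P ⧸ H) ≃* Multiplicative (ZMod p) := mulEquivOfPrimeCardEq hq hM
  refine ⟨φ.toMonoidHom.comp (QuotientGroup.mk' H), ?_⟩
  ext x
  simp [MonoidHom.mem_ker, QuotientGroup.eq_one_iff, EmbeddingLike.map_eq_one_iff]

end Aux

theorem subgroups_of_p_cubed (p : ℕ) (hp : p.Prime)
    (P : Type*) [Group P] (hP : Nat.card P = p ^ 3) :
    Nat.card (Subgroup P) ≤ 2 * p ^ 2 + 2 * p + 4 := by
  classical
  have hfact : Fact p.Prime := ⟨hp⟩
  have hfin : Finite P := Nat.finite_of_card_ne_zero (by rw [hP]; exact pow_ne_zero _ hp.pos.ne')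
  have instP := Fintype.ofFinite P
  have instS := Fintype.ofFinite (Subgroup P)
  have hfinM : Finite (P →* MM p) :=
    Finite.of_injective (fun f => (f : P → MM p)) DFunLike.coe_injective
  have instH := Fintype.ofFinite (P →* MM p)
  have hMcard : Nat.card (MM p) = p :=
    (Nat.card_congr (Multiplicative.toAdd (α := ZMod p))).trans (Nat.card_zmod p)
  set s0 : Finset (Subgroup P) := univ.filter (fun H => Nat.card H = 1) with hs0
  set s1 : Finset (Subgroup P) := univ.filter (fun H => Nat.card H = p) with hs1
  set s2 : Finset (Subgroup P) := univ.filter (fun H => Nat.card H = p ^ 2) with hs2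
  set s3 : Finset (Subgroup P) := univ.filter (fun H => Nat.card H = p ^ 3) with hs3
  have hcover : (univ : Finset (Subgroup P)) ⊆ s0 ∪ s1 ∪ s2 ∪ s3 := by
    intro H _
    obtain ⟨k, hk3, hk⟩ := (Nat.dvd_prime_pow hp).mp (hP ▸ Subgroup.card_subgroup_dvd_card H)
    simp only [hs0, hs1, hs2, hs3, Finset.mem_union, Finset.mem_filter, Finset.mem_univ, true_and]
    interval_cases k
    · left; left; left; simpa using hk
    · left; left; right; simpa using hk
    · left; right; exact hk
    · right; exact hk
  have hs0card : s0.card ≤ 1 := by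
    apply Finset.card_le_one.mpr
    intro a ha b hb
    simp only [hs0, Finset.mem_filter] at ha hb
    rw [Subgroup.card_eq_one.mp ha.2, Subgroup.card_eq_one.mp hb.2]
  have hs3card : s3.card ≤ 1 := by
    apply Finset.card_le_one.mpr
    intro a ha b hb
    simp only [hs3, Finset.mem_filter] at ha hb
    rw [Subgroup.eq_top_of_card_eq _ (ha.2.trans hP.symm),
        Subgroup.eq_top_of_card_eq _ (hb.2.trans hP.symm)]
  have hs1card : s1.card ≤ p ^ 2 + p + 1 := by
    apply cancel_aux hp
    set t : Subgroup P → Finset P := fun H => (univ.filter (· ∈ H)).erase 1 with ht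
    have htcard : ∀ H ∈ s1, (t H).card = p - 1 := by
      intro H hH
      simp only [hs1, Finset.mem_filter] at hH
      have h1 : (univ.filter (· ∈ H)).card = p := by
        rw [← Fintype.card_subtype, ← Nat.card_eq_fintype_card]
        exact hH.2
      rw [ht, Finset.card_erase_of_mem (by simp [H.one_mem]), h1]
    have hdisj : ∀ H ∈ s1, ∀ K ∈ s1, H ≠ K → Disjoint (t H) (t K) := by
      intro H hH K hK hne
      simp only [hs1, Finset.mem_filter] at hH hK
      rw [Finset.disjoint_left]
      intro x hx hx'
      simp only [ht, Finset.mem_erase, Finset.mem_filter, Finset.mem_univ, true_and] at hx hx'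
      exact hne ((zpowers_eq_aux hp hH.2 hx.2 hx.1).symm.trans
        (zpowers_eq_aux hp hK.2 hx'.2 hx'.1))
    have hbu : (s1.biUnion t).card = s1.card * (p - 1) := by
      rw [Finset.card_biUnion hdisj, Finset.sum_congr rfl htcard, Finset.sum_const, smul_eq_mul]
    have hsub : s1.biUnion t ⊆ univ.erase (1 : P) := by
      intro x hx
      simp only [Finset.mem_biUnion] at hx
      obtain ⟨H, hH, hxH⟩ := hx
      simp only [ht, Finset.mem_erase, Finset.mem_filter, Finset.mem_univ, true_and] at hxH
      simp [hxH.1]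
    calc s1.card * (p - 1) = (s1.biUnion t).card := hbu.symm
      _ ≤ (univ.erase (1 : P)).card := Finset.card_le_card hsub
      _ = p ^ 3 - 1 := by
          rw [Finset.card_erase_of_mem (Finset.mem_univ 1), Finset.card_univ,
            ← Nat.card_eq_fintype_card, hP]
  have hs2card : s2.card ≤ p ^ 2 + p + 1 := by
    apply cancel_aux hp
    have hex : ∀ H : Subgroup P, Nat.card H = p ^ 2 → ∃ f : P →* MM p, f.ker = H :=
      fun H hH => exists_ker_eq hp hP hH
    set F : Subgroup P → (P →* MM p) := fun H =>
      if h : Nat.card H = p ^ 2 then (hex H h).choose else 1 with hF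
    have hFker : ∀ H ∈ s2, (F H).ker = H := by
      intro H hH
      simp only [hs2, Finset.mem_filter] at hH
      simp only [hF, dif_pos hH.2]
      exact (hex H hH.2).choose_spec
    have hHneTop : ∀ H ∈ s2, H ≠ ⊤ := by
      intro H hH h
      have hH2 := (Finset.mem_filter.mp hH).2
      rw [h] at hH2
      have htopc : Nat.card (⊤ : Subgroup P) = Nat.card P :=
        Nat.card_congr Subgroup.topEquiv.toEquiv
      rw [htopc, hP] at hH2
      have := hp.two_le
      nlinarith [hH2]
    have horderp : ∀ H ∈ s2, ∀ x : P, (F H) x ≠ 1 → orderOf ((F H) x) = p := by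
      intro H hH x hfx
      have hdp : orderOf ((F H) x) ∣ p := by
        have h2 := _root_.orderOf_dvd_natCard ((F H) x)
        rwa [hMcard] at h2
      rcases (Nat.dvd_prime hp).mp hdp with h1 | h1
      · exact absurd (orderOf_eq_one_iff.mp h1) hfx
      · exact h1
    have hkerpow : ∀ H ∈ s2, ∀ c ∈ Finset.Ico 1 p, (F H ^ c).ker = H := by
      intro H hH c hc
      simp only [Finset.mem_Ico] at hc
      refine Eq.trans ?_ (hFker H hH)
      ext x
      simp only [MonoidHom.mem_ker, MonoidHom.pow_apply]
      constructor
      · intro h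
        have hd : orderOf ((F H) x) ∣ c := orderOf_dvd_of_pow_eq_one h
        by_contra hne
        rw [horderp H hH x hne] at hd
        exact absurd (Nat.le_of_dvd (by omega) hd) (by omega)
      · intro h; rw [h, one_pow]
    set t2 : Subgroup P → Finset (P →* MM p) :=
      fun H => (Finset.Ico 1 p).image (fun c => F H ^ c) with ht2
    have ht2card : ∀ H ∈ s2, (t2 H).card = p - 1 := by
      intro H hH
      rw [ht2]
      rw [Finset.card_image_of_injOn, Nat.card_Ico]
      intro c hc c' hc' hcc
      obtain ⟨x, hx⟩ : ∃ x, x ∉ H := by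
        by_contra hcon
        push_neg at hcon
        exact hHneTop H hH (Subgroup.eq_top_iff' H |>.mpr hcon)
      have hfx : (F H) x ≠ 1 := by
        intro h
        exact hx (hFker H hH ▸ MonoidHom.mem_ker.mpr h)
      have horder := horderp H hH x hfx
      have hcx := DFunLike.congr_fun hcc x
      simp only [MonoidHom.pow_apply] at hcx
      have hmod := pow_eq_pow_iff_modEq.mp hcx
      rw [horder] at hmod
      simp only [Finset.coe_Ico, Set.mem_Ico] at hc hc'
      unfold Nat.ModEq at hmod
      rw [Nat.mod_eq_of_lt hc.2, Nat.mod_eq_of_lt hc'.2] at hmod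
      exact hmod
    have hdisj2 : ∀ H ∈ s2, ∀ K ∈ s2, H ≠ K → Disjoint (t2 H) (t2 K) := by
      intro H hH K hK hne
      rw [Finset.disjoint_left]
      intro f hf hf'
      simp only [ht2, Finset.mem_image] at hf hf'
      obtain ⟨c, hc, rfl⟩ := hf
      obtain ⟨c', hc', heq⟩ := hf'
      have h1 := hkerpow H hH c hc
      have h2 := hkerpow K hK c' hc'
      rw [heq] at h2
      exact hne (h1.symm.trans h2)
    have hbu2 : (s2.biUnion t2).card = s2.card * (p - 1) := by
      rw [Finset.card_biUnion hdisj2, Finset.sum_congr rfl ht2card, Finset.sum_const, smul_eq_mul]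
    have hsub2 : s2.biUnion t2 ⊆ univ.erase (1 : P →* MM p) := by
      intro f hf
      simp only [Finset.mem_biUnion] at hf
      obtain ⟨H, hH, hfH⟩ := hf
      simp only [ht2, Finset.mem_image] at hfH
      obtain ⟨c, hc, rfl⟩ := hfH
      refine Finset.mem_erase.mpr ⟨?_, Finset.mem_univ _⟩
      intro h
      apply hHneTop H hH
      rw [← hkerpow H hH c hc, h, MonoidHom.ker_one]
    have hhom : Fintype.card (P →* MM p) ≤ p ^ 3 := by
      obtain ⟨a, b, c, habc⟩ := exists_three_gens hp hP
      have hinj : Function.Injective (fun f : P →* MM p => (f a, f b, f c)) := by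
        intro f g h
        simp only [Prod.mk.injEq] at h
        refine MonoidHom.eq_of_eqOn_dense habc ?_
        intro x hx
        simp only [Set.mem_insert_iff, Set.mem_singleton_iff] at hx
        rcases hx with rfl | rfl | rfl
        · exact h.1
        · exact h.2.1
        · exact h.2.2
      calc Fintype.card (P →* MM p) ≤ Fintype.card (MM p × MM p × MM p) :=
            Fintype.card_le_of_injective _ hinj
        _ = p ^ 3 := by
            rw [← Nat.card_eq_fintype_card, Nat.card_prod, Nat.card_prod, hMcard]; ring
    calc s2.card * (p - 1) = (s2.biUnion t2).card := hbu2.symm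
      _ ≤ (univ.erase (1 : P →* MM p)).card := Finset.card_le_card hsub2
      _ = Fintype.card (P →* MM p) - 1 := by
          rw [Finset.card_erase_of_mem (Finset.mem_univ _), Finset.card_univ]
      _ ≤ p ^ 3 - 1 := Nat.sub_le_sub_right hhom 1
  calc Nat.card (Subgroup P) = (univ : Finset (Subgroup P)).card := by
        rw [Nat.card_eq_fintype_card, Finset.card_univ]
    _ ≤ (s0 ∪ s1 ∪ s2 ∪ s3).card := Finset.card_le_card hcover
    _ ≤ s0.card + s1.card + s2.card + s3.card := by
        have h1 := Finset.card_union_le (s0 ∪ s1 ∪ s2) s3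
        have h2 := Finset.card_union_le (s0 ∪ s1) s2
        have h3 := Finset.card_union_le s0 s1
        omega
    _ ≤ 1 + (p ^ 2 + p + 1) + (p ^ 2 + p + 1) + 1 :=
        add_le_add (add_le_add (add_le_add hs0card hs1card) hs2card) hs3card
    _ = 2 * p ^ 2 + 2 * p + 4 := by ring
end

section
/- For every prime p, a group of order p⁴ has at most p⁴ + 3p³ + 4p² + 3p + 5 subgroups. -/
open Finset Subgroup
open scoped Pointwise

section Helpers

variable {G : Type*} [Group G] [Fintype G] {p : ℕ}

set_option linter.unusedSectionVars false
open scoped Classical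

/-- The finset of elements of a subgroup. -/
private lemma card_filter_mem (H : Subgroup G) :
    (Finset.univ.filter (· ∈ H)).card = Nat.card H := by
  rw [Nat.card_eq_fintype_card]
  exact (Fintype.card_subtype _).symm

private lemma eq_of_le_of_card_eq {H K : Subgroup G} (hle : H ≤ K)
    (h : Nat.card H = Nat.card K) : H = K :=
  Subgroup.eq_of_le_of_card_ge hle h.ge

private lemma card_zpowers_eq (hp : p.Prime) {x : G} (hx1 : x ≠ 1) (hxp : x ^ p = 1) :
    Nat.card (Subgroup.zpowers x) = p := by
  rw [Nat.card_zpowers]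
  rcases (Nat.dvd_prime hp).1 (orderOf_dvd_of_pow_eq_one hxp) with h | h
  · exact absurd (orderOf_eq_one_iff.1 h) hx1
  · exact h

private lemma card_closure_singleton (hp : p.Prime) {x : G} (hx1 : x ≠ 1) (hxp : x ^ p = 1) :
    Nat.card (Subgroup.closure ({x} : Set G)) = p := by
  rw [← Subgroup.zpowers_eq_closure]
  exact card_zpowers_eq hp hx1 hxp

/-- generation lemma : if `x ≠ 1`, `x^p = 1`, `y ∉ ⟨x⟩` all inside a subgroup of
order `p^2`, then `x` and `y` generate it. -/
private lemma closure_pair_eq (hp : p.Prime) {H : Subgroup G} (hH : Nat.card H = p ^ 2)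
    {x y : G} (hx : x ∈ H) (hy : y ∈ H) (hx1 : x ≠ 1) (hxp : x ^ p = 1)
    (hyx : y ∉ Subgroup.closure ({x} : Set G)) :
    Subgroup.closure ({x, y} : Set G) = H := by
  set L := Subgroup.closure ({x, y} : Set G) with hL
  have hLH : L ≤ H := by
    rw [hL, Subgroup.closure_le]
    intro a ha
    rcases ha with rfl | ha
    · exact hx
    · rw [Set.mem_singleton_iff] at ha; subst ha; exact hy
  have hCL : Subgroup.closure ({x} : Set G) ≤ L :=
    Subgroup.closure_mono (by simp)
  have hcardC : Nat.card (Subgroup.closure ({x} : Set G)) = p := card_closure_singleton hp hx1 hxp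
  have hdvd : Nat.card L ∣ p ^ 2 := hH ▸ Subgroup.card_dvd_of_le hLH
  obtain ⟨j, hj2, hcardL⟩ := (Nat.dvd_prime_pow hp).1 hdvd
  interval_cases j
  · -- card L = 1 impossible: contains subgroup of card p
    exfalso
    have := hcardC ▸ Subgroup.card_dvd_of_le hCL
    rw [hcardL, pow_zero] at this
    exact absurd (Nat.eq_one_of_dvd_one this) hp.ne_one
  · -- card L = p: L = closure {x}, contradiction with y
    exfalso
    apply hyx
    have : Subgroup.closure ({x} : Set G) = L :=
      eq_of_le_of_card_eq hCL (by rw [hcardC, hcardL, pow_one])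
    rw [this]
    exact Subgroup.subset_closure (by simp)
  · exact eq_of_le_of_card_eq hLH (by rw [hcardL, hH])

/-- counting subgroups of prime order. -/
private lemma count_order_p (hp : p.Prime) :
    (Finset.univ.filter fun H : Subgroup G => Nat.card H = p).card * (p - 1)
      ≤ Fintype.card G - 1 := by
  have key := Finset.card_mul_le_card_mul (s := Finset.univ.filter fun H : Subgroup G => Nat.card H = p)
    (t := Finset.univ.erase (1 : G)) (fun H x => x ∈ H) (m := p - 1) (n := 1)
    ?_ ?_
  · simpa using key
  · intro H hH
    rw [Finset.mem_filter] at hH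
    have : (Finset.univ.erase (1:G)).bipartiteAbove (fun H x => x ∈ H) H
        = ((Finset.univ.filter (· ∈ H)).erase 1) := by
      ext x
      simp [Finset.mem_bipartiteAbove, Finset.mem_erase, and_comm]
    rw [this, Finset.card_erase_of_mem (by simp [Subgroup.one_mem])]
    have hf : (Finset.univ.filter (· ∈ H)).card = Nat.card H := by
      rw [Nat.card_eq_fintype_card]; exact (Fintype.card_subtype _).symm
    rw [hf, hH.2]
  · intro x hx
    rw [Finset.mem_erase] at hx
    rw [Finset.card_le_one]
    intro H₁ h₁ H₂ h₂
    simp only [Finset.mem_bipartiteBelow, Finset.mem_filter] at h₁ h₂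
    have gen : ∀ H : Subgroup G, Nat.card H = p → x ∈ H → H = Subgroup.zpowers x := by
      intro H hH hxH
      have hxp : x ^ p = 1 := by
        apply orderOf_dvd_iff_pow_eq_one.1
        rw [← hH]
        have h1 : orderOf (⟨x, hxH⟩ : H) ∣ Nat.card H := orderOf_dvd_natCard _
        rwa [← orderOf_submonoid] at h1
      have hord : Nat.card (Subgroup.zpowers x) = p := by
        rw [Nat.card_zpowers]
        rcases (Nat.dvd_prime hp).1 (orderOf_dvd_of_pow_eq_one hxp) with h | h
        · exact absurd (orderOf_eq_one_iff.1 h) hx.1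
        · exact h
      exact (Subgroup.eq_of_le_of_card_ge ((Subgroup.zpowers_le).2 hxH) (by rw [hH, hord])).symm
    rw [gen H₁ h₁.1.2 h₁.2, gen H₂ h₂.1.2 h₂.2]
private lemma pow_card_subgroup {H : Subgroup G} {x : G} (hx : x ∈ H) :
    orderOf x ∣ Nat.card H := by
  have h1 : orderOf (⟨x, hx⟩ : H) ∣ Nat.card H := orderOf_dvd_natCard _
  rwa [← orderOf_submonoid] at h1

private lemma count_cyclic_p2 (hp : p.Prime) :
    (Finset.univ.filter fun H : Subgroup G =>
        Nat.card H = p ^ 2 ∧ ∃ x ∈ H, orderOf x = p ^ 2).card * (p ^ 2 - p)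
      + (Finset.univ.filter fun x : G => x ^ p = 1).card ≤ Fintype.card G := by
  have hp0 : 0 < p := hp.pos
  have key := Finset.card_mul_le_card_mul
    (s := Finset.univ.filter fun H : Subgroup G =>
        Nat.card H = p ^ 2 ∧ ∃ x ∈ H, orderOf x = p ^ 2)
    (t := Finset.univ.filter fun x : G => orderOf x = p ^ 2)
    (fun H x => x ∈ H) (m := p ^ 2 - p) (n := 1) ?_ ?_
  · rw [mul_one] at key
    calc _ ≤ (Finset.univ.filter fun x : G => orderOf x = p ^ 2).card
          + (Finset.univ.filter fun x : G => x ^ p = 1).card := by omega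
    _ = ((Finset.univ.filter fun x : G => orderOf x = p ^ 2)
          ∪ (Finset.univ.filter fun x : G => x ^ p = 1)).card := by
        rw [Finset.card_union_of_disjoint]
        rw [Finset.disjoint_filter]
        intro z _ hz hzp
        have : orderOf z ∣ p := orderOf_dvd_of_pow_eq_one hzp
        rw [hz] at this
        have := Nat.le_of_dvd hp0 this
        nlinarith [hp.two_le]
    _ ≤ Fintype.card G := by
        simpa using Finset.card_le_card (Finset.subset_univ _)
  · -- each cyclic subgroup of order p^2 contains exactly p^2 - p elements of order p^2
    intro H hH
    rw [Finset.mem_filter] at hH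
    obtain ⟨-, hcard, g, hgH, hg⟩ := hH
    have hHzg : H = Subgroup.zpowers g := by
      refine (Subgroup.eq_of_le_of_card_ge ((Subgroup.zpowers_le).2 hgH) ?_).symm
      rw [hcard, Nat.card_zpowers, hg]
    have habove : (Finset.univ.filter fun x : G => orderOf x = p ^ 2).bipartiteAbove
        (fun H x => x ∈ H) H
        = (Finset.univ.filter (· ∈ H)) \ (Finset.univ.filter fun x => x ∈ H ∧ x ^ p = 1) := by
      ext z
      simp only [Finset.mem_bipartiteAbove, Finset.mem_filter, Finset.mem_sdiff, Finset.mem_univ,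
        true_and]
      constructor
      · rintro ⟨hord, hzH⟩
        refine ⟨hzH, fun h => ?_⟩
        have : orderOf z ∣ p := orderOf_dvd_of_pow_eq_one h.2
        rw [hord] at this
        have := Nat.le_of_dvd hp0 this
        nlinarith [hp.two_le]
      · rintro ⟨hzH, hnot⟩
        have hzdvd : orderOf z ∣ p ^ 2 := hcard ▸ pow_card_subgroup hzH
        obtain ⟨j, hj2, hordz⟩ := (Nat.dvd_prime_pow hp).1 hzdvd
        interval_cases j
        · exfalso; exact hnot ⟨hzH, by
            have : orderOf z = 1 := by simpa using hordz
            have := orderOf_eq_one_iff.1 this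
            simp [this]⟩
        · exfalso; exact hnot ⟨hzH, by
            rw [pow_one] at hordz
            exact orderOf_dvd_iff_pow_eq_one.1 (hordz ▸ dvd_refl _)⟩
        · exact ⟨hordz, hzH⟩
    rw [habove]
    have hsub : (Finset.univ.filter fun x => x ∈ H ∧ x ^ p = 1)
        = (Finset.univ.filter (· ∈ Subgroup.zpowers (g ^ p))) := by
      ext z
      simp only [Finset.mem_filter, Finset.mem_univ, true_and]
      constructor
      · rintro ⟨hzH, hzp⟩
        rw [hHzg] at hzH
        obtain ⟨k, hk⟩ := hzH
        have hk' : g ^ k = z := hk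
        have hk1 : g ^ (k * (p : ℤ)) = 1 := by
          rw [zpow_mul, hk', zpow_natCast]; exact hzp
        have hdvd : ((p : ℤ) ^ 2) ∣ k * p := by
          have h2 := (orderOf_dvd_iff_zpow_eq_one).2 hk1
          rw [hg] at h2
          exact_mod_cast h2
        have hpne : (p : ℤ) ≠ 0 := by exact_mod_cast hp0.ne'
        obtain ⟨m, hm⟩ := hdvd
        have hkpm : k = p * m := by
          apply mul_right_cancel₀ hpne
          linear_combination hm
        refine ⟨m, ?_⟩
        show (g ^ p) ^ m = z
        rw [← zpow_natCast g p, ← zpow_mul, ← hkpm, hk']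
      · rintro ⟨m, hm⟩
        have hm' : (g ^ p) ^ m = z := hm
        constructor
        · rw [← hm', hHzg]
          exact Subgroup.zpow_mem _ (Subgroup.pow_mem _ (Subgroup.mem_zpowers g) p) m
        · rw [← hm', ← zpow_natCast g p, ← zpow_mul, ← zpow_natCast _ p, ← zpow_mul]
          have he : (p : ℤ) * m * p = ((p ^ 2 : ℕ) : ℤ) * m := by push_cast; ring
          rw [he, zpow_mul, zpow_natCast, ← hg, pow_orderOf_eq_one, one_zpow]
    have hcardsub : (Finset.univ.filter fun x => x ∈ H ∧ x ^ p = 1).card = p := by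
      rw [hsub]
      have : (Finset.univ.filter (· ∈ Subgroup.zpowers (g ^ p))).card
          = Nat.card (Subgroup.zpowers (g ^ p)) := by
        rw [Nat.card_eq_fintype_card]; exact (Fintype.card_subtype _).symm
      rw [this, Nat.card_zpowers, orderOf_pow' g hp0.ne', hg, Nat.gcd_eq_right (dvd_pow_self p two_ne_zero), pow_two, Nat.mul_div_cancel _ hp0]
    rw [Finset.card_sdiff_of_subset (by intro z hz; simp only [Finset.mem_filter] at hz ⊢; exact ⟨hz.1, hz.2.1⟩)]
    have hF : (Finset.univ.filter (· ∈ H)).card = p ^ 2 := by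
      rw [show (Finset.univ.filter (· ∈ H)).card = Nat.card H by
        rw [Nat.card_eq_fintype_card]; exact (Fintype.card_subtype _).symm, hcard]
    rw [hF, hcardsub]
  · -- at most one subgroup per element of order p^2
    intro x hx
    rw [Finset.mem_filter] at hx
    rw [Finset.card_le_one]
    intro H₁ h₁ H₂ h₂
    simp only [Finset.mem_bipartiteBelow, Finset.mem_filter] at h₁ h₂
    have gen : ∀ H : Subgroup G, Nat.card H = p ^ 2 → x ∈ H → H = Subgroup.zpowers x := by
      intro H hH hxH
      refine (Subgroup.eq_of_le_of_card_ge ((Subgroup.zpowers_le).2 hxH) ?_).symm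
      rw [hH, Nat.card_zpowers, hx.2]
    rw [gen H₁ h₁.1.2.1 h₁.2, gen H₂ h₂.1.2.1 h₂.2]

private lemma pow_eq_one_of_mem_closure_singleton {x z : G} (hx : x ^ p = 1)
    (hz : z ∈ Subgroup.closure ({x} : Set G)) : z ^ p = 1 := by
  rw [← Subgroup.zpowers_eq_closure] at hz
  obtain ⟨k, hk⟩ := hz
  have hk' : x ^ k = z := hk
  rw [← hk', ← zpow_natCast _ p, ← zpow_mul, mul_comm, zpow_mul, zpow_natCast, hx, one_zpow]

private lemma count_expp_p2 (hp : p.Prime) :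
    (Finset.univ.filter fun H : Subgroup G =>
        Nat.card H = p ^ 2 ∧ ∀ x ∈ H, x ^ p = 1).card * ((p ^ 2 - 1) * (p ^ 2 - p))
      ≤ ((Finset.univ.filter fun x : G => x ^ p = 1).card - 1)
        * ((Finset.univ.filter fun x : G => x ^ p = 1).card - p) := by
  classical
  set S : Finset G := Finset.univ.filter fun x : G => x ^ p = 1 with hS
  have hmemS : ∀ z : G, z ∈ S ↔ z ^ p = 1 := by intro z; simp [hS]
  have h1S : (1 : G) ∈ S := by rw [hmemS]; exact one_pow p
  -- Cx cardinality
  have hCx : ∀ x : G, x ≠ 1 → x ^ p = 1 →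
      (Finset.univ.filter (· ∈ Subgroup.closure ({x} : Set G))).card = p := by
    intro x hx1 hxp
    rw [card_filter_mem, card_closure_singleton hp hx1 hxp]
  have key := Finset.card_mul_le_card_mul
    (s := Finset.univ.filter fun H : Subgroup G =>
        Nat.card H = p ^ 2 ∧ ∀ x ∈ H, x ^ p = 1)
    (t := (S.erase 1).sigma fun x => S.filter (· ∉ Subgroup.closure ({x} : Set G)))
    (fun H w => w.1 ∈ H ∧ w.2 ∈ H) (m := (p ^ 2 - 1) * (p ^ 2 - p)) (n := 1) ?_ ?_
  · rw [mul_one] at key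
    refine key.trans ?_
    rw [Finset.card_sigma]
    have hterm : ∀ x ∈ S.erase 1,
        (S.filter (· ∉ Subgroup.closure ({x} : Set G))).card = S.card - p := by
      intro x hx
      rw [Finset.mem_erase, hmemS] at hx
      have hsub : (Finset.univ.filter (· ∈ Subgroup.closure ({x} : Set G))) ⊆ S := by
        intro z hz
        rw [Finset.mem_filter] at hz
        rw [hmemS]
        exact pow_eq_one_of_mem_closure_singleton hx.2 hz.2
      have : S.filter (· ∉ Subgroup.closure ({x} : Set G))
          = S \ (Finset.univ.filter (· ∈ Subgroup.closure ({x} : Set G))) := by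
        ext z; simp [Finset.mem_sdiff]
      rw [this, Finset.card_sdiff_of_subset hsub, hCx x hx.1 hx.2]
    rw [Finset.sum_congr rfl hterm, Finset.sum_const, smul_eq_mul,
      Finset.card_erase_of_mem h1S]
  · -- lower bound on fibers
    intro H hH
    rw [Finset.mem_filter] at hH
    obtain ⟨-, hcard, hexp⟩ := hH
    set F : Finset G := Finset.univ.filter (· ∈ H) with hF
    have hFcard : F.card = p ^ 2 := by rw [hF, card_filter_mem, hcard]
    have h1F : (1 : G) ∈ F := by simp [hF, Subgroup.one_mem]
    have habove : ((S.erase 1).sigma fun x =>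
          S.filter (· ∉ Subgroup.closure ({x} : Set G))).bipartiteAbove
          (fun H w => w.1 ∈ H ∧ w.2 ∈ H) H
        = (F.erase 1).sigma fun x => F.filter (· ∉ Subgroup.closure ({x} : Set G)) := by
      ext ⟨x, y⟩
      simp only [Finset.mem_bipartiteAbove, Finset.mem_sigma, Finset.mem_erase,
        Finset.mem_filter, hF, Finset.mem_univ, true_and, hmemS]
      constructor
      · rintro ⟨⟨⟨hx1, hxp⟩, hyp, hyx⟩, hxH, hyH⟩
        exact ⟨⟨hx1, hxH⟩, hyH, hyx⟩
      · rintro ⟨⟨hx1, hxH⟩, hyH, hyx⟩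
        exact ⟨⟨⟨hx1, hexp x hxH⟩, hexp y hyH, hyx⟩, hxH, hyH⟩
    rw [habove, Finset.card_sigma]
    have hterm : ∀ x ∈ F.erase 1,
        (F.filter (· ∉ Subgroup.closure ({x} : Set G))).card = p ^ 2 - p := by
      intro x hx
      rw [Finset.mem_erase, hF, Finset.mem_filter] at hx
      have hxH : x ∈ H := hx.2.2
      have hxp : x ^ p = 1 := hexp x hxH
      have hsub : (Finset.univ.filter (· ∈ Subgroup.closure ({x} : Set G))) ⊆ F := by
        intro z hz
        rw [Finset.mem_filter] at hz
        rw [hF, Finset.mem_filter]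
        refine ⟨Finset.mem_univ z, ?_⟩
        have : Subgroup.closure ({x} : Set G) ≤ H := by
          rw [Subgroup.closure_le]; simpa using hxH
        exact this hz.2
      have : F.filter (· ∉ Subgroup.closure ({x} : Set G))
          = F \ (Finset.univ.filter (· ∈ Subgroup.closure ({x} : Set G))) := by
        ext z; simp [Finset.mem_sdiff]
      rw [this, Finset.card_sdiff_of_subset hsub, hCx x hx.1 hxp, hFcard]
    rw [Finset.sum_congr rfl hterm, Finset.sum_const, smul_eq_mul,
      Finset.card_erase_of_mem h1F, hFcard]
  · -- uniqueness
    rintro ⟨x, y⟩ hw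
    rw [Finset.mem_sigma, Finset.mem_erase, hmemS] at hw
    obtain ⟨⟨hx1, hxp⟩, hy⟩ := hw
    rw [Finset.mem_filter] at hy
    rw [Finset.card_le_one]
    intro H₁ h₁ H₂ h₂
    simp only [Finset.mem_bipartiteBelow, Finset.mem_filter] at h₁ h₂
    rw [← closure_pair_eq hp h₁.1.2.1 h₁.2.1 h₁.2.2 hx1 hxp hy.2,
      ← closure_pair_eq hp h₂.1.2.1 h₂.2.1 h₂.2.2 hx1 hxp hy.2]


private lemma normal_of_forall_comm (hcomm : ∀ a b : G, a * b = b * a) (K : Subgroup G) :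
    K.Normal := by
  constructor
  intro n hn g
  have : g * n * g⁻¹ = n := by rw [hcomm g n, mul_assoc]; simp
  rwa [this]

private lemma card_sup_le (hcomm : ∀ a b : G, a * b = b * a) (K L : Subgroup G) :
    Nat.card (K ⊔ L : Subgroup G) ≤ Nat.card K * Nat.card L := by
  haveI : L.Normal := normal_of_forall_comm hcomm L
  have hset : ((K ⊔ L : Subgroup G) : Set G) = (K : Set G) * (L : Set G) :=
    Subgroup.mul_normal K L
  calc Nat.card (K ⊔ L : Subgroup G)
      = Nat.card ((K : Set G) * (L : Set G) : Set G) := Nat.card_congr (Equiv.setCongr hset)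
    _ ≤ Nat.card (K : Set G) * Nat.card (L : Set G) := Set.natCard_mul_le
    _ = Nat.card K * Nat.card L := by simp

private lemma card_closure_pair' (hp : p.Prime) (hcomm : ∀ a b : G, a * b = b * a)
    (hexp : ∀ x : G, x ^ p = 1) (hcard4 : Nat.card G = p ^ 4) {x y : G} (hx1 : x ≠ 1)
    (hyx : y ∉ Subgroup.closure ({x} : Set G)) :
    Nat.card (Subgroup.closure ({x, y} : Set G)) = p ^ 2 := by
  have hy1 : y ≠ 1 := fun h => hyx (h ▸ Subgroup.one_mem _)
  have hCx : Nat.card (Subgroup.closure ({x} : Set G)) = p :=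
    card_closure_singleton hp hx1 (hexp x)
  have hCy : Nat.card (Subgroup.closure ({y} : Set G)) = p :=
    card_closure_singleton hp hy1 (hexp y)
  have hsplit : Subgroup.closure ({x, y} : Set G)
      = Subgroup.closure ({x} : Set G) ⊔ Subgroup.closure ({y} : Set G) := by
    rw [show ({x, y} : Set G) = {x} ∪ {y} by rfl, Subgroup.closure_union]
  have hle : Nat.card (Subgroup.closure ({x, y} : Set G)) ≤ p ^ 2 := by
    rw [hsplit, pow_two]
    calc Nat.card (Subgroup.closure ({x} : Set G) ⊔ Subgroup.closure ({y} : Set G) : Subgroup G)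
        ≤ _ := card_sup_le hcomm _ _
      _ = p * p := by rw [hCx, hCy]
  have hdvd : Nat.card (Subgroup.closure ({x, y} : Set G)) ∣ p ^ 4 := by
    rw [← hcard4]; exact Subgroup.card_subgroup_dvd_card _
  obtain ⟨j, hj4, hj⟩ := (Nat.dvd_prime_pow hp).1 hdvd
  have hCxle : Subgroup.closure ({x} : Set G) ≤ Subgroup.closure ({x, y} : Set G) :=
    Subgroup.closure_mono (by simp)
  have hpdvd : p ∣ Nat.card (Subgroup.closure ({x, y} : Set G)) :=
    hCx ▸ Subgroup.card_dvd_of_le hCxle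
  rw [hj] at hpdvd
  have hj1 : 1 ≤ j := by
    rcases Nat.eq_zero_or_pos j with rfl | h
    · rw [pow_zero] at hpdvd
      exact absurd (Nat.eq_one_of_dvd_one hpdvd) hp.ne_one
    · exact h
  have hj2 : j ≤ 2 := by
    by_contra h
    push_neg at h
    have h3 : p ^ 3 ≤ p ^ j := Nat.pow_le_pow_right hp.pos h
    have h2 : p ^ 2 < p ^ 3 := Nat.pow_lt_pow_right hp.one_lt (by omega)
    rw [hj] at hle
    omega
  have hjcase : j = 1 ∨ j = 2 := by omega
  rcases hjcase with rfl | rfl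
  · exfalso
    apply hyx
    have heq : Subgroup.closure ({x} : Set G) = Subgroup.closure ({x, y} : Set G) :=
      eq_of_le_of_card_eq hCxle (by rw [hCx, hj, pow_one])
    rw [heq]
    exact Subgroup.subset_closure (by simp)
  · exact hj

private lemma closure_triple_eq (hp : p.Prime) (hcomm : ∀ a b : G, a * b = b * a)
    (hexp : ∀ x : G, x ^ p = 1) (hcard4 : Nat.card G = p ^ 4) {H : Subgroup G}
    (hH : Nat.card H = p ^ 3) {x y z : G} (hx : x ∈ H) (hy : y ∈ H) (hz : z ∈ H)
    (hx1 : x ≠ 1) (hyx : y ∉ Subgroup.closure ({x} : Set G))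
    (hzxy : z ∉ Subgroup.closure ({x, y} : Set G)) :
    Subgroup.closure ({x, y, z} : Set G) = H := by
  have hC2 : Nat.card (Subgroup.closure ({x, y} : Set G)) = p ^ 2 :=
    card_closure_pair' hp hcomm hexp hcard4 hx1 hyx
  set L := Subgroup.closure ({x, y, z} : Set G) with hL
  have hLH : L ≤ H := by
    rw [hL, Subgroup.closure_le]
    intro a ha
    rcases ha with rfl | rfl | ha
    · exact hx
    · exact hy
    · rw [Set.mem_singleton_iff] at ha; subst ha; exact hz
  have hC2L : Subgroup.closure ({x, y} : Set G) ≤ L := by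
    apply Subgroup.closure_mono
    intro a ha
    rcases ha with rfl | rfl
    · exact Set.mem_insert _ _
    · exact Set.mem_insert_of_mem _ (Set.mem_insert _ _)
  have hdvd : Nat.card L ∣ p ^ 3 := hH ▸ Subgroup.card_dvd_of_le hLH
  obtain ⟨j, hj3, hj⟩ := (Nat.dvd_prime_pow hp).1 hdvd
  have hpdvd : p ^ 2 ∣ Nat.card L := hC2 ▸ Subgroup.card_dvd_of_le hC2L
  rw [hj] at hpdvd
  have hj2 : 2 ≤ j := (Nat.pow_dvd_pow_iff_le_right hp.one_lt).1 hpdvd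
  have hjcase : j = 2 ∨ j = 3 := by omega
  rcases hjcase with rfl | rfl
  · -- card L = p^2 : L = closure {x,y}, contra z
    exfalso
    apply hzxy
    have : Subgroup.closure ({x, y} : Set G) = L := eq_of_le_of_card_eq hC2L (by rw [hC2, hj])
    rw [this]
    exact Subgroup.subset_closure (by simp)
  · exact eq_of_le_of_card_eq hLH (by rw [hj, hH])

private lemma card_filter_not_mem {K : Subgroup G} {F : Finset G}
    (hsub : Finset.univ.filter (· ∈ K) ⊆ F) :
    (F.filter (· ∉ K)).card = F.card - Nat.card K := by
  have : F.filter (· ∉ K) = F \ (Finset.univ.filter (· ∈ K)) := by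
    ext z; simp [Finset.mem_sdiff]
  rw [this, Finset.card_sdiff_of_subset hsub, card_filter_mem]

private lemma count_p3_of_expp (hp : p.Prime) (hcomm : ∀ a b : G, a * b = b * a)
    (hexp : ∀ x : G, x ^ p = 1) (hcard4 : Nat.card G = p ^ 4) :
    (Finset.univ.filter fun H : Subgroup G => Nat.card H = p ^ 3).card *
      ((p ^ 3 - 1) * ((p ^ 3 - p) * (p ^ 3 - p ^ 2)))
      ≤ (p ^ 4 - 1) * ((p ^ 4 - p) * (p ^ 4 - p ^ 2)) := by
  classical
  have huniv : (Finset.univ : Finset G).card = p ^ 4 := by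
    rw [← hcard4, Nat.card_eq_fintype_card, Finset.card_univ]
  have hCxcard : ∀ x : G, x ≠ 1 → Nat.card (Subgroup.closure ({x} : Set G)) = p :=
    fun x hx1 => card_closure_singleton hp hx1 (hexp x)
  have key := Finset.card_mul_le_card_mul
    (s := Finset.univ.filter fun H : Subgroup G => Nat.card H = p ^ 3)
    (t := (Finset.univ.erase (1 : G)).sigma fun x =>
      ((Finset.univ.filter (· ∉ Subgroup.closure ({x} : Set G))).sigma fun y =>
        Finset.univ.filter (· ∉ Subgroup.closure ({x, y} : Set G))))
    (fun H w => w.1 ∈ H ∧ w.2.1 ∈ H ∧ w.2.2 ∈ H)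
    (m := (p ^ 3 - 1) * ((p ^ 3 - p) * (p ^ 3 - p ^ 2))) (n := 1) ?_ ?_
  · rw [mul_one] at key
    refine key.trans ?_
    rw [Finset.card_sigma]
    have houter : ∀ x ∈ Finset.univ.erase (1 : G),
        (((Finset.univ.filter (· ∉ Subgroup.closure ({x} : Set G))).sigma fun y =>
          Finset.univ.filter (· ∉ Subgroup.closure ({x, y} : Set G)))).card
        ≤ (p ^ 4 - p) * (p ^ 4 - p ^ 2) := by
      intro x hx
      rw [Finset.mem_erase] at hx
      rw [Finset.card_sigma]
      have hinner : ∀ y ∈ Finset.univ.filter (· ∉ Subgroup.closure ({x} : Set G)),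
          (Finset.univ.filter (· ∉ Subgroup.closure ({x, y} : Set G))).card = p ^ 4 - p ^ 2 := by
        intro y hy
        rw [Finset.mem_filter] at hy
        rw [card_filter_not_mem (Finset.subset_univ _), huniv,
          card_closure_pair' hp hcomm hexp hcard4 hx.1 hy.2]
      rw [Finset.sum_congr rfl hinner, Finset.sum_const, smul_eq_mul]
      apply Nat.mul_le_mul_right
      rw [card_filter_not_mem (Finset.subset_univ _), huniv, hCxcard x hx.1]
    calc ∑ x ∈ Finset.univ.erase (1 : G), _ ≤ ∑ _x ∈ Finset.univ.erase (1 : G),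
          (p ^ 4 - p) * (p ^ 4 - p ^ 2) := Finset.sum_le_sum houter
      _ = (p ^ 4 - 1) * ((p ^ 4 - p) * (p ^ 4 - p ^ 2)) := by
          rw [Finset.sum_const, smul_eq_mul, Finset.card_erase_of_mem (Finset.mem_univ 1), huniv]
  · -- fiber count
    intro H hH
    rw [Finset.mem_filter] at hH
    obtain ⟨-, hcard⟩ := hH
    set F : Finset G := Finset.univ.filter (· ∈ H) with hF
    have hFcard : F.card = p ^ 3 := by rw [hF, card_filter_mem, hcard]
    have h1F : (1 : G) ∈ F := by simp [hF, Subgroup.one_mem]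
    have habove : (((Finset.univ.erase (1 : G)).sigma fun x =>
          ((Finset.univ.filter (· ∉ Subgroup.closure ({x} : Set G))).sigma fun y =>
            Finset.univ.filter (· ∉ Subgroup.closure ({x, y} : Set G))))).bipartiteAbove
          (fun H w => w.1 ∈ H ∧ w.2.1 ∈ H ∧ w.2.2 ∈ H) H
        = (F.erase 1).sigma fun x =>
            ((F.filter (· ∉ Subgroup.closure ({x} : Set G))).sigma fun y =>
              F.filter (· ∉ Subgroup.closure ({x, y} : Set G))) := by
      ext ⟨x, y, z⟩
      simp only [Finset.mem_bipartiteAbove, Finset.mem_sigma, Finset.mem_erase,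
        Finset.mem_filter, hF, Finset.mem_univ, true_and]
      tauto
    rw [habove, Finset.card_sigma]
    have houter : ∀ x ∈ F.erase 1,
        (((F.filter (· ∉ Subgroup.closure ({x} : Set G))).sigma fun y =>
          F.filter (· ∉ Subgroup.closure ({x, y} : Set G)))).card
        = (p ^ 3 - p) * (p ^ 3 - p ^ 2) := by
      intro x hx
      rw [Finset.mem_erase, hF, Finset.mem_filter] at hx
      have hxH : x ∈ H := hx.2.2
      have hCxle : Subgroup.closure ({x} : Set G) ≤ H := by
        rw [Subgroup.closure_le]; simpa using hxH
      rw [Finset.card_sigma]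
      have hinner : ∀ y ∈ F.filter (· ∉ Subgroup.closure ({x} : Set G)),
          (F.filter (· ∉ Subgroup.closure ({x, y} : Set G))).card = p ^ 3 - p ^ 2 := by
        intro y hy
        rw [Finset.mem_filter, hF, Finset.mem_filter] at hy
        have hyH : y ∈ H := hy.1.2
        have hC2le : Subgroup.closure ({x, y} : Set G) ≤ H := by
          rw [Subgroup.closure_le]
          intro a ha
          rcases ha with rfl | ha
          · exact hxH
          · rw [Set.mem_singleton_iff] at ha; subst ha; exact hyH
        have hsub2 : Finset.univ.filter (· ∈ Subgroup.closure ({x, y} : Set G)) ⊆ F := by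
          intro w hw
          rw [Finset.mem_filter] at hw
          rw [hF, Finset.mem_filter]
          exact ⟨Finset.mem_univ w, hC2le hw.2⟩
        rw [card_filter_not_mem hsub2, hFcard,
          card_closure_pair' hp hcomm hexp hcard4 hx.1 hy.2]
      rw [Finset.sum_congr rfl hinner, Finset.sum_const, smul_eq_mul]
      have hsub1 : Finset.univ.filter (· ∈ Subgroup.closure ({x} : Set G)) ⊆ F := by
        intro w hw
        rw [Finset.mem_filter] at hw
        rw [hF, Finset.mem_filter]
        exact ⟨Finset.mem_univ w, hCxle hw.2⟩
      rw [card_filter_not_mem hsub1, hFcard, hCxcard x hx.1]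
    rw [Finset.sum_congr rfl houter, Finset.sum_const, smul_eq_mul,
      Finset.card_erase_of_mem h1F, hFcard]
  · -- uniqueness
    rintro ⟨x, y, z⟩ hw
    simp only [Finset.mem_sigma, Finset.mem_erase, Finset.mem_filter, Finset.mem_univ,
      true_and] at hw
    obtain ⟨⟨hx1, -⟩, hyx, hzxy⟩ := hw
    rw [Finset.card_le_one]
    intro H₁ h₁ H₂ h₂
    simp only [Finset.mem_bipartiteBelow, Finset.mem_filter] at h₁ h₂
    rw [← closure_triple_eq hp hcomm hexp hcard4 h₁.1.2 h₁.2.1 h₁.2.2.1 h₁.2.2.2 hx1 hyx hzxy,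
      ← closure_triple_eq hp hcomm hexp hcard4 h₂.1.2 h₂.2.1 h₂.2.2.1 h₂.2.2.2 hx1 hyx hzxy]


private lemma count_expp_p2' (hp : p.Prime) (hexp : ∀ x : G, x ^ p = 1) :
    (Finset.univ.filter fun H : Subgroup G => Nat.card H = p ^ 2).card
        * ((p ^ 2 - 1) * (p ^ 2 - p))
      ≤ (Fintype.card G - 1) * (Fintype.card G - p) := by
  have h := count_expp_p2 (G := G) hp
  have hSall : (Finset.univ.filter fun x : G => x ^ p = 1) = Finset.univ :=
    Finset.filter_true_of_mem (fun x _ => hexp x)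
  rw [hSall, Finset.card_univ] at h
  refine le_trans ?_ h
  apply Nat.mul_le_mul_right
  apply Finset.card_le_card
  intro B hB
  rw [Finset.mem_filter] at hB ⊢
  exact ⟨hB.1, hB.2, fun x _ => hexp x⟩


end Helpers

section Main

open scoped Classical
open scoped commutatorElement

set_option maxHeartbeats 1000000

private lemma count_p3 {P : Type*} [Group P] [Fintype P] {p : ℕ} (hp : p.Prime)
    (hP : Nat.card P = p ^ 4) :
    (Finset.univ.filter fun H : Subgroup P => Nat.card H = p ^ 3).card
      ≤ p ^ 3 + p ^ 2 + p + 1 := by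
  haveI : Fact p.Prime := ⟨hp⟩
  have h1p : 1 ≤ p := hp.pos
  have h2p : 2 ≤ p := hp.two_le
  have hindex : ∀ H : Subgroup P, Nat.card H = p ^ 3 → H.index = p := by
    intro H hH
    have hmul := Subgroup.card_mul_index H
    rw [hH, hP] at hmul
    have hp3 : 0 < p ^ 3 := pow_pos hp.pos 3
    have : p ^ 3 * H.index = p ^ 3 * p := by rw [hmul]; ring
    exact Nat.eq_of_mul_eq_mul_left hp3 this
  have hnormal : ∀ H : Subgroup P, Nat.card H = p ^ 3 → H.Normal := by
    intro H hH
    have hpg : IsPGroup p P := IsPGroup.of_card hP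
    haveI hnil : Group.IsNilpotent P := hpg.isNilpotent
    have hnc : NormalizerCondition P := normalizerCondition_of_isNilpotent
    apply Subgroup.NormalizerCondition.normal_of_coatom _ hnc
    constructor
    · intro htop
      rw [htop, Subgroup.card_top, hP] at hH
      have := Nat.pow_right_injective hp.two_le hH
      omega
    · intro K hK
      have hdvd : K.index ∣ H.index := Subgroup.index_dvd_of_le hK.le
      rw [hindex H hH] at hdvd
      rcases (Nat.dvd_prime hp).1 hdvd with h1 | h1
      · rwa [Subgroup.index_eq_one] at h1
      · exfalso
        have hrel := Subgroup.relIndex_mul_index hK.le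
        rw [hindex H hH, h1] at hrel
        have : H.relIndex K = 1 := Nat.eq_of_mul_eq_mul_right hp.pos
          (by rw [hrel, one_mul])
        exact hK.not_ge (Subgroup.relIndex_eq_one.1 this)
  -- the subgroup generated by commutators and p-th powers
  set S : Set P := {x : P | (∃ a b : P, ⁅a, b⁆ = x) ∨ ∃ a : P, a ^ p = x} with hSdef
  set Φ : Subgroup P := Subgroup.normalClosure S with hΦdef
  haveI hΦn : Φ.Normal := Subgroup.normalClosure_normal
  have hΦle : ∀ H : Subgroup P, Nat.card H = p ^ 3 → Φ ≤ H := by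
    intro H hH
    haveI := hnormal H hH
    apply Subgroup.normalClosure_le_normal
    have hcardQ : Nat.card (P ⧸ H) = p := by
      rw [← Subgroup.index_eq_card, hindex H hH]
    haveI : IsCyclic (P ⧸ H) := isCyclic_of_prime_card hcardQ
    have hcomm : ∀ u v : P ⧸ H, u * v = v * u := fun u v =>
      (IsCyclic.commGroup (α := P ⧸ H)).mul_comm u v
    rintro x (⟨a, b, rfl⟩ | ⟨a, rfl⟩)
    · rw [SetLike.mem_coe, ← QuotientGroup.eq_one_iff]
      have hmap : ((⁅a, b⁆ : P) : P ⧸ H)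
          = ⁅((a : P) : P ⧸ H), ((b : P) : P ⧸ H)⁆ :=
        map_commutatorElement (QuotientGroup.mk' H) a b
      rw [hmap]
      exact commutatorElement_eq_one_iff_mul_comm.2 (hcomm _ _)
    · rw [SetLike.mem_coe, ← QuotientGroup.eq_one_iff]
      have hmap : ((a ^ p : P) : P ⧸ H) = ((a : P) : P ⧸ H) ^ p :=
        map_pow (QuotientGroup.mk' H) a p
      rw [hmap]
      have := pow_card_eq_one' (G := P ⧸ H) (x := ((a : P) : P ⧸ H))
      rwa [hcardQ] at this
  haveI : Fintype (P ⧸ Φ) := Fintype.ofFinite _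
  have hVcomm : ∀ u v : P ⧸ Φ, u * v = v * u := by
    intro u v
    refine QuotientGroup.induction_on u fun a => QuotientGroup.induction_on v fun b => ?_
    have key : ((a * b : P) : P ⧸ Φ) = ((b * a : P) : P ⧸ Φ) := by
      rw [QuotientGroup.eq]
      apply Subgroup.subset_normalClosure
      exact Or.inl ⟨b⁻¹, a⁻¹, by group⟩
    simpa using key
  have hVexp : ∀ u : P ⧸ Φ, u ^ p = 1 := by
    intro u
    refine QuotientGroup.induction_on u fun a => ?_
    have key : ((a ^ p : P) : P ⧸ Φ) = 1 := by
      rw [QuotientGroup.eq_one_iff]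
      exact Subgroup.subset_normalClosure (Or.inr ⟨a, rfl⟩)
    simpa using key
  have hcardV : Nat.card (P ⧸ Φ) ∣ p ^ 4 := by
    rw [← hP, ← Subgroup.index_eq_card]
    exact Subgroup.index_dvd_card Φ
  obtain ⟨d, hd4, hV⟩ := (Nat.dvd_prime_pow hp).1 hcardV
  -- inject subgroups of order p^3 into index-p subgroups of the quotient
  have hinj : (Finset.univ.filter fun H : Subgroup P => Nat.card H = p ^ 3).card
      ≤ (Finset.univ.filter fun B : Subgroup (P ⧸ Φ) => B.index = p).card := by
    apply Finset.card_le_card_of_injOn (fun H => Subgroup.map (QuotientGroup.mk' Φ) H)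
    · intro H hH
      rw [Finset.mem_coe, Finset.mem_filter] at hH
      rw [Finset.mem_coe, Finset.mem_filter]
      refine ⟨Finset.mem_univ _, ?_⟩
      rw [Subgroup.index_map_eq H (QuotientGroup.mk'_surjective Φ)
        (by rw [QuotientGroup.ker_mk']; exact hΦle H hH.2)]
      exact hindex H hH.2
    · intro H₁ h₁ H₂ h₂ heq
      rw [Finset.mem_coe, Finset.mem_filter] at h₁ h₂
      exact Subgroup.map_injective_of_ker_le (QuotientGroup.mk' Φ)
        (by rw [QuotientGroup.ker_mk']; exact hΦle _ h₁.2)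
        (by rw [QuotientGroup.ker_mk']; exact hΦle _ h₂.2) heq
  refine hinj.trans ?_
  have hBcard : ∀ B : Subgroup (P ⧸ Φ), B.index = p → 1 ≤ d ∧ Nat.card B = p ^ (d - 1) := by
    intro B hB
    have hmul := Subgroup.card_mul_index B
    rw [hB, hV] at hmul
    have hd1 : 1 ≤ d := by
      by_contra h
      push_neg at h
      interval_cases d
      · rw [pow_zero] at hmul
        have := Nat.eq_one_of_mul_eq_one_left hmul
        exact hp.ne_one this
    refine ⟨hd1, ?_⟩
    have : Nat.card B * p = p ^ (d - 1) * p := by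
      rw [hmul, ← pow_succ]
      congr 1
      omega
    exact Nat.eq_of_mul_eq_mul_right hp.pos this
  have hVFcard : Fintype.card (P ⧸ Φ) = p ^ d := by
    rw [← Nat.card_eq_fintype_card, hV]
  interval_cases d
  · -- d = 0 : no index-p subgroups
    have : (Finset.univ.filter fun B : Subgroup (P ⧸ Φ) => B.index = p) = ∅ := by
      rw [Finset.filter_eq_empty_iff]
      intro B _
      intro hB
      exact absurd (hBcard B hB).1 (by omega)
    rw [this]
    simp
  · -- d = 1 : only the trivial subgroup
    have hsub : (Finset.univ.filter fun B : Subgroup (P ⧸ Φ) => B.index = p) ⊆ {⊥} := by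
      intro B hB
      rw [Finset.mem_filter] at hB
      have := (hBcard B hB.2).2
      have this : Nat.card B = 1 := by simpa using this
      rw [Finset.mem_singleton]
      exact Subgroup.card_eq_one.1 this
    calc _ ≤ ({⊥} : Finset (Subgroup (P ⧸ Φ))).card := Finset.card_le_card hsub
      _ = 1 := Finset.card_singleton _
      _ ≤ _ := by omega
  · -- d = 2 : subgroups of order p
    have hsub : (Finset.univ.filter fun B : Subgroup (P ⧸ Φ) => B.index = p)
        ⊆ (Finset.univ.filter fun B : Subgroup (P ⧸ Φ) => Nat.card B = p) := by
      intro B hB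
      rw [Finset.mem_filter] at hB ⊢
      refine ⟨Finset.mem_univ _, ?_⟩
      have := (hBcard B hB.2).2
      rwa [pow_one] at this
    refine (Finset.card_le_card hsub).trans ?_
    have hcount := count_order_p (G := P ⧸ Φ) hp
    rw [hVFcard] at hcount
    have hple : p ≤ p ^ 2 := by nlinarith
    have hident : (p + 1) * (p - 1) = p ^ 2 - 1 := by
      zify [h1p, one_le_two, show 1 ≤ p ^ 2 by nlinarith]
      ring
    have : (Finset.univ.filter fun B : Subgroup (P ⧸ Φ) => Nat.card B = p).card * (p - 1)
        ≤ (p + 1) * (p - 1) := by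
      rw [hident]; exact hcount
    have hcancel := Nat.le_of_mul_le_mul_right this (by omega)
    calc _ ≤ p + 1 := hcancel
      _ ≤ _ := by nlinarith
  · -- d = 3 : subgroups of order p^2, all of exponent p
    have hsub : (Finset.univ.filter fun B : Subgroup (P ⧸ Φ) => B.index = p)
        ⊆ (Finset.univ.filter fun B : Subgroup (P ⧸ Φ) => Nat.card B = p ^ 2) := by
      intro B hB
      rw [Finset.mem_filter] at hB ⊢
      exact ⟨Finset.mem_univ _, (hBcard B hB.2).2⟩
    refine (Finset.card_le_card hsub).trans ?_
    have hcount := count_expp_p2' (G := P ⧸ Φ) hp hVexp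
    rw [hVFcard] at hcount
    have h2 : 1 ≤ p ^ 2 := Nat.one_le_pow _ _ hp.pos
    have h3 : 1 ≤ p ^ 3 := Nat.one_le_pow _ _ hp.pos
    have hp2 : p ≤ p ^ 2 := by nlinarith
    have hp3 : p ≤ p ^ 3 := by nlinarith
    have hident : (p ^ 2 + p + 1) * ((p ^ 2 - 1) * (p ^ 2 - p))
        = (p ^ 3 - 1) * (p ^ 3 - p) := by
      zify [h1p, h2, h3, hp2, hp3]
      ring
    have hD : 0 < (p ^ 2 - 1) * (p ^ 2 - p) := by
      have hlt : p < p ^ 2 := by nlinarith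
      exact Nat.mul_pos (by omega) (by omega)
    have hcancel := Nat.le_of_mul_le_mul_right (hcount.trans (le_of_eq hident.symm)) hD
    calc _ ≤ p ^ 2 + p + 1 := hcancel
      _ ≤ _ := by nlinarith
  · -- d = 4 : subgroups of order p^3 in an elementary abelian group
    have hsub : (Finset.univ.filter fun B : Subgroup (P ⧸ Φ) => B.index = p)
        ⊆ (Finset.univ.filter fun B : Subgroup (P ⧸ Φ) => Nat.card B = p ^ 3) := by
      intro B hB
      rw [Finset.mem_filter] at hB ⊢
      exact ⟨Finset.mem_univ _, (hBcard B hB.2).2⟩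
    refine (Finset.card_le_card hsub).trans ?_
    have hcount := count_p3_of_expp (G := P ⧸ Φ) hp hVcomm hVexp hV
    have h2 : 1 ≤ p ^ 2 := Nat.one_le_pow _ _ hp.pos
    have h3 : 1 ≤ p ^ 3 := Nat.one_le_pow _ _ hp.pos
    have h4 : 1 ≤ p ^ 4 := Nat.one_le_pow _ _ hp.pos
    have hp3 : p ≤ p ^ 3 := by nlinarith
    have hp4 : p ≤ p ^ 4 := by nlinarith
    have hp23 : p ^ 2 ≤ p ^ 3 := Nat.pow_le_pow_right hp.pos (by omega)
    have hp24 : p ^ 2 ≤ p ^ 4 := Nat.pow_le_pow_right hp.pos (by omega)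
    have hident : (p ^ 3 + p ^ 2 + p + 1) * ((p ^ 3 - 1) * ((p ^ 3 - p) * (p ^ 3 - p ^ 2)))
        = (p ^ 4 - 1) * ((p ^ 4 - p) * (p ^ 4 - p ^ 2)) := by
      zify [h1p, h2, h3, h4, hp3, hp4, hp23, hp24]
      ring
    have hD : 0 < (p ^ 3 - 1) * ((p ^ 3 - p) * (p ^ 3 - p ^ 2)) := by
      have hq2 : p ^ 2 < p ^ 3 := Nat.pow_lt_pow_right hp.one_lt (by omega)
      have hq1 : p < p ^ 3 := by nlinarith
      exact Nat.mul_pos (by omega) (Nat.mul_pos (by omega) (by omega))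
    exact Nat.le_of_mul_le_mul_right (hcount.trans (le_of_eq hident.symm)) hD

theorem subgroups_of_p_fourth (p : ℕ) (hp : p.Prime)
    (P : Type*) [Group P] (hP : Nat.card P = p ^ 4) :
    Nat.card (Subgroup P) ≤ p ^ 4 + 3 * p ^ 3 + 4 * p ^ 2 + 3 * p + 5 := by
  haveI : Fact p.Prime := ⟨hp⟩
  have h1p : 1 ≤ p := hp.pos
  have h2p : 2 ≤ p := hp.two_le
  haveI hfinP : Finite P := Nat.finite_of_card_ne_zero (by
    rw [hP]; positivity)
  haveI : Fintype P := Fintype.ofFinite P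
  have hcardP : Fintype.card P = p ^ 4 := by rw [← Nat.card_eq_fintype_card, hP]
  set A := Finset.univ.filter fun H : Subgroup P => Nat.card H = 1 with hA
  set B := Finset.univ.filter fun H : Subgroup P => Nat.card H = p with hB
  set C := Finset.univ.filter fun H : Subgroup P =>
    Nat.card H = p ^ 2 ∧ ∃ x ∈ H, orderOf x = p ^ 2 with hC
  set D := Finset.univ.filter fun H : Subgroup P =>
    Nat.card H = p ^ 2 ∧ ∀ x ∈ H, x ^ p = 1 with hD
  set E := Finset.univ.filter fun H : Subgroup P => Nat.card H = p ^ 3 with hE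
  set F := Finset.univ.filter fun H : Subgroup P => Nat.card H = p ^ 4 with hF
  have hmem : (Finset.univ : Finset (Subgroup P)) ⊆ A ∪ B ∪ (C ∪ D) ∪ E ∪ F := by
    intro H _
    have hdvd : Nat.card H ∣ p ^ 4 := hP ▸ Subgroup.card_subgroup_dvd_card H
    obtain ⟨k, hk4, hcard⟩ := (Nat.dvd_prime_pow hp).1 hdvd
    simp only [hA, hB, hC, hD, hE, hF, Finset.mem_union, Finset.mem_filter, Finset.mem_univ,
      true_and]
    interval_cases k
    · exact Or.inl (Or.inl (Or.inl (Or.inl (by simpa using hcard))))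
    · exact Or.inl (Or.inl (Or.inl (Or.inr (by simpa using hcard))))
    · refine Or.inl (Or.inl (Or.inr ?_))
      by_cases hcase : ∀ x ∈ H, x ^ p = 1
      · exact Or.inr ⟨hcard, hcase⟩
      · push_neg at hcase
        obtain ⟨x, hxH, hxp⟩ := hcase
        have hdvdx : orderOf x ∣ p ^ 2 := hcard ▸ pow_card_subgroup hxH
        obtain ⟨j, hj2, hordx⟩ := (Nat.dvd_prime_pow hp).1 hdvdx
        have hj : j = 2 := by
          interval_cases j
          · exfalso
            apply hxp
            rw [pow_zero] at hordx
            rw [orderOf_eq_one_iff.1 hordx, one_pow]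
          · exfalso
            apply hxp
            rw [pow_one] at hordx
            exact orderOf_dvd_iff_pow_eq_one.1 (hordx ▸ dvd_refl _)
          · rfl
        exact Or.inl ⟨hcard, x, hxH, by rw [hordx, hj]⟩
    · exact Or.inl (Or.inr hcard)
    · exact Or.inr hcard
  -- bounds for each part
  have hAcard : A.card ≤ 1 := by
    rw [Finset.card_le_one]
    intro H₁ h₁ H₂ h₂
    rw [hA, Finset.mem_filter] at h₁ h₂
    rw [Subgroup.card_eq_one.1 h₁.2, Subgroup.card_eq_one.1 h₂.2]
  have hFcard : F.card ≤ 1 := by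
    rw [Finset.card_le_one]
    intro H₁ h₁ H₂ h₂
    rw [hF, Finset.mem_filter] at h₁ h₂
    have htop : ∀ H : Subgroup P, Nat.card H = p ^ 4 → H = ⊤ := fun H hH =>
      Subgroup.eq_top_of_card_eq H (by rw [hH, hP])
    rw [htop H₁ h₁.2, htop H₂ h₂.2]
  have hBcard : B.card ≤ p ^ 3 + p ^ 2 + p + 1 := by
    have hcount := count_order_p (G := P) hp
    rw [hcardP, ← hB] at hcount
    have h4 : 1 ≤ p ^ 4 := Nat.one_le_pow _ _ hp.pos
    have hident : (p ^ 3 + p ^ 2 + p + 1) * (p - 1) = p ^ 4 - 1 := by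
      zify [h1p, h4]
      ring
    refine Nat.le_of_mul_le_mul_right ?_ (show 0 < p - 1 by omega)
    rw [hident]
    exact hcount
  have hEcard : E.card ≤ p ^ 3 + p ^ 2 + p + 1 := by rw [hE]; exact count_p3 hp hP
  -- the combined bound for subgroups of order p^2
  have hCD : C.card + D.card ≤ p ^ 4 + p ^ 3 + 2 * p ^ 2 + p + 1 := by
    set E₀ := (Finset.univ.filter fun x : P => x ^ p = 1).card with hE₀
    have hcyc := count_cyclic_p2 (G := P) hp
    have hexp := count_expp_p2 (G := P) hp
    rw [hcardP, ← hC, ← hE₀] at hcyc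
    rw [← hD, ← hE₀] at hexp
    have hE₀1 : 1 ≤ E₀ := by
      rw [hE₀]
      refine Finset.card_pos.2 ⟨1, ?_⟩
      simp
    have hE₀4 : E₀ ≤ p ^ 4 := by
      rw [hE₀, ← hcardP, ← Finset.card_univ]
      exact Finset.card_le_card (Finset.filter_subset _ _)
    have h2 : 1 ≤ p ^ 2 := Nat.one_le_pow _ _ hp.pos
    have h4 : 1 ≤ p ^ 4 := Nat.one_le_pow _ _ hp.pos
    have hp2 : p ≤ p ^ 2 := by nlinarith
    have hp4 : p ≤ p ^ 4 := by nlinarith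
    have hp24 : p ^ 2 ≤ p ^ 4 := Nat.pow_le_pow_right hp.pos (by omega)
    have h1 : C.card * (p ^ 2 - p) ≤ p ^ 4 - E₀ := by omega
    have hkey : (p ^ 4 - E₀) * (p ^ 2 - 1) + (E₀ - 1) * (E₀ - p)
        ≤ (p ^ 4 - 1) * (p ^ 4 - p) := by
      rcases le_or_gt p E₀ with hpe | hpe
      · zify [h1p, h2, h4, hp4, hE₀1, hE₀4, hpe]
        nlinarith [mul_nonneg (by linarith : (0:ℤ) ≤ (p:ℤ) ^ 4 - (E₀:ℤ))
            (by nlinarith : (0:ℤ) ≤ (p:ℤ) ^ 4 + (E₀:ℤ) - (p:ℤ) ^ 2 - (p:ℤ)),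
          sq_nonneg ((p:ℤ) ^ 2 - (p:ℤ))]
      · have hz : E₀ - p = 0 := by omega
        rw [hz, mul_zero, add_zero]
        have hle1 : p ^ 4 - E₀ ≤ p ^ 4 - 1 := by omega
        have hle2 : p ^ 2 - 1 ≤ p ^ 4 - p := by
          have : p ^ 2 + p ≤ p ^ 4 + 1 := by nlinarith
          omega
        exact Nat.mul_le_mul hle1 hle2
    have hD₀pos : 0 < (p ^ 2 - 1) * (p ^ 2 - p) := by
      have hlt : p < p ^ 2 := by nlinarith
      exact Nat.mul_pos (by omega) (by omega)
    refine Nat.le_of_mul_le_mul_right ?_ hD₀pos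
    have hsplit : (C.card + D.card) * ((p ^ 2 - 1) * (p ^ 2 - p))
        ≤ (p ^ 4 - E₀) * (p ^ 2 - 1) + (E₀ - 1) * (E₀ - p) := by
      rw [add_mul]
      refine Nat.add_le_add ?_ hexp
      calc C.card * ((p ^ 2 - 1) * (p ^ 2 - p))
          = C.card * (p ^ 2 - p) * (p ^ 2 - 1) := by ring
        _ ≤ (p ^ 4 - E₀) * (p ^ 2 - 1) := Nat.mul_le_mul_right _ h1
    refine hsplit.trans (hkey.trans (le_of_eq ?_))
    zify [h1p, h2, h4, hp2, hp4]
    ring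
  -- put everything together
  calc Nat.card (Subgroup P) = (Finset.univ : Finset (Subgroup P)).card := by
        rw [Nat.card_eq_fintype_card, Finset.card_univ]
    _ ≤ (A ∪ B ∪ (C ∪ D) ∪ E ∪ F).card := Finset.card_le_card hmem
    _ ≤ A.card + B.card + (C.card + D.card) + E.card + F.card := by
        refine le_trans (Finset.card_union_le _ _) (Nat.add_le_add_right ?_ _)
        refine le_trans (Finset.card_union_le _ _) (Nat.add_le_add_right ?_ _)
        refine le_trans (Finset.card_union_le _ _) ?_
        exact Nat.add_le_add (Finset.card_union_le _ _) (Finset.card_union_le _ _)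
    _ ≤ 1 + (p ^ 3 + p ^ 2 + p + 1) + (p ^ 4 + p ^ 3 + 2 * p ^ 2 + p + 1)
          + (p ^ 3 + p ^ 2 + p + 1) + 1 := by
        gcongr
    _ = p ^ 4 + 3 * p ^ 3 + 4 * p ^ 2 + 3 * p + 5 := by ring

end Main
end

section
/- For every prime p and every even integer a ≥ 6, ∑_{k=0}^a p^{k(a-k)} ≤ 2.129 · p^{a²/4}. -/
lemma nat_exp_eq (m j : ℕ) (hj : j ≤ m) :
    (m - j) * (m + m - (m - j)) = m ^ 2 - j ^ 2 := by
  obtain ⟨d, rfl⟩ : ∃ d, m = j + d := ⟨m - j, by omega⟩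
  have e1 : j + d - j = d := by omega
  have e2 : j + d + (j + d) - d = j + (j + d) := by omega
  have h : (j + d) ^ 2 = j ^ 2 + d * (j + (j + d)) := by ring
  rw [e1, e2, h, Nat.add_sub_cancel_left]

lemma nat_exp_eq' (m j : ℕ) (hj : j ≤ m) :
    (m + j) * (m + m - (m + j)) = m ^ 2 - j ^ 2 := by
  obtain ⟨d, rfl⟩ : ∃ d, m = j + d := ⟨m - j, by omega⟩
  have e2 : j + d + (j + d) - (j + d + j) = d := by omega
  have h : (j + d) ^ 2 = j ^ 2 + (j + d + j) * d := by ring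
  rw [e2, h, Nat.add_sub_cancel_left]

lemma aux1 (P : ℝ) (hP : 2 ≤ P) (m j : ℕ) (hj : j ≤ m) :
    P ^ (m ^ 2 - j ^ 2) ≤ P ^ (m ^ 2) * ((1 : ℝ) / 2) ^ (j ^ 2) := by
  have h0 : (0 : ℝ) < P := by linarith
  have hle : j ^ 2 ≤ m ^ 2 := Nat.pow_le_pow_left hj 2
  have key : P ^ (m ^ 2 - j ^ 2) * 2 ^ (j ^ 2) ≤ P ^ (m ^ 2) := by
    calc P ^ (m ^ 2 - j ^ 2) * 2 ^ (j ^ 2)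
        ≤ P ^ (m ^ 2 - j ^ 2) * P ^ (j ^ 2) := by
          gcongr
      _ = P ^ (m ^ 2) := by rw [← pow_add, Nat.sub_add_cancel hle]
  have h2 : (0 : ℝ) < (2 : ℝ) ^ (j ^ 2) := by positivity
  rw [div_pow, one_pow, mul_div_assoc', le_div_iff₀ h2]
  linarith [key]

lemma geom_tail (n : ℕ) : ∑ i ∈ Finset.range n, ((1 : ℝ) / 64) ^ i ≤ 64 / 63 := by
  rw [geom_sum_eq (by norm_num)]
  rw [div_le_iff_of_neg (by norm_num)]
  have : (0 : ℝ) ≤ (1 / 64 : ℝ) ^ n := by positivity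
  linarith

lemma T_bound (m : ℕ) (hm : 3 ≤ m) :
    ∑ j ∈ Finset.range (m + 1), ((1 : ℝ) / 2) ^ (j ^ 2) ≤ 1 + 1 / 2 + 1 / 16 + 1 / 504 := by
  obtain ⟨n, hn⟩ : ∃ n, m + 1 = 3 + n := ⟨m - 2, by omega⟩
  rw [hn, Finset.sum_range_add]
  have h3 : ∑ j ∈ Finset.range 3, ((1 : ℝ) / 2) ^ (j ^ 2) = 1 + 1 / 2 + 1 / 16 := by
    simp [Finset.sum_range_succ]
    norm_num
  rw [h3]
  have htail : ∑ x ∈ Finset.range n, ((1 : ℝ) / 2) ^ ((3 + x) ^ 2)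
      ≤ ∑ x ∈ Finset.range n, (1 / 512 : ℝ) * ((1 : ℝ) / 64) ^ x := by
    apply Finset.sum_le_sum
    intro x _
    have he : (9 + 6 * x : ℕ) ≤ (3 + x) ^ 2 := by nlinarith
    calc ((1 : ℝ) / 2) ^ ((3 + x) ^ 2)
        ≤ ((1 : ℝ) / 2) ^ (9 + 6 * x) :=
          pow_le_pow_of_le_one (by norm_num) (by norm_num) he
      _ = (1 / 512 : ℝ) * ((1 : ℝ) / 64) ^ x := by
          rw [pow_add, pow_mul]; norm_num
  have hg : ∑ x ∈ Finset.range n, (1 / 512 : ℝ) * ((1 : ℝ) / 64) ^ x ≤ 1 / 504 := by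
    rw [← Finset.mul_sum]
    calc (1 / 512 : ℝ) * ∑ x ∈ Finset.range n, ((1 : ℝ) / 64) ^ x
        ≤ (1 / 512 : ℝ) * (64 / 63) := by
          apply mul_le_mul_of_nonneg_left (geom_tail n) (by norm_num)
      _ = 1 / 504 := by norm_num
  linarith

theorem sum_pow_even (p : ℕ) (hp : p.Prime) (a : ℕ) (hev : Even a) (ha : 6 ≤ a) :
    ∑ k ∈ Finset.range (a + 1), (p : ℝ) ^ (k * (a - k)) ≤
      2.129 * (p : ℝ) ^ ((a : ℝ) ^ 2 / 4) := by
  obtain ⟨m, rfl⟩ := hev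
  have hm : 3 ≤ m := by omega
  have hP : (2 : ℝ) ≤ (p : ℝ) := by exact_mod_cast hp.two_le
  have hP0 : (0 : ℝ) < (p : ℝ) := by linarith
  set P : ℝ := (p : ℝ)
  set T : ℝ := ∑ j ∈ Finset.range (m + 1), ((1 : ℝ) / 2) ^ (j ^ 2) with hT
  have hTb : T ≤ 1 + 1 / 2 + 1 / 16 + 1 / 504 := T_bound m hm
  -- rewrite the rpow
  have hrpow : P ^ (((m + m : ℕ) : ℝ) ^ 2 / 4) = P ^ (m ^ 2) := by
    have h1 : ((m + m : ℕ) : ℝ) ^ 2 / 4 = ((m ^ 2 : ℕ) : ℝ) := by push_cast; ring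
    rw [h1, Real.rpow_natCast]
  rw [hrpow]
  -- split the sum
  have hsplit : m + m + 1 = (m + 1) + m := by omega
  rw [hsplit, Finset.sum_range_add]
  have hpart1 : ∑ k ∈ Finset.range (m + 1), P ^ (k * (m + m - k)) ≤ P ^ (m ^ 2) * T := by
    rw [hT, Finset.mul_sum, ← Finset.sum_range_reflect (fun k => P ^ (k * (m + m - k))) (m + 1)]
    apply Finset.sum_le_sum
    intro j hj
    have hjm : j ≤ m := by simpa [Nat.lt_succ_iff] using Finset.mem_range.mp hj
    have : m + 1 - 1 - j = m - j := by omega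
    rw [this, nat_exp_eq m j hjm]
    exact aux1 P hP m j hjm
  have hpart2 : ∑ x ∈ Finset.range m, P ^ ((m + 1 + x) * (m + m - (m + 1 + x)))
      ≤ P ^ (m ^ 2) * (T - 1) := by
    have hTsucc : T = (∑ x ∈ Finset.range m, ((1 : ℝ) / 2) ^ ((x + 1) ^ 2)) + 1 := by
      rw [hT, Finset.sum_range_succ' (fun j => ((1 : ℝ) / 2) ^ (j ^ 2)) m]
      norm_num
    have : P ^ (m ^ 2) * (T - 1) = ∑ x ∈ Finset.range m, P ^ (m ^ 2) * ((1 : ℝ) / 2) ^ ((x + 1) ^ 2) := by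
      rw [← Finset.mul_sum, hTsucc]; ring
    rw [this]
    apply Finset.sum_le_sum
    intro x hx
    have hxm : x + 1 ≤ m := Finset.mem_range.mp hx
    have he : m + 1 + x = m + (x + 1) := by omega
    rw [he, nat_exp_eq' m (x + 1) hxm]
    exact aux1 P hP m (x + 1) hxm
  have hPm : (0 : ℝ) < P ^ (m ^ 2) := by positivity
  have hfinal : P ^ (m ^ 2) * T + P ^ (m ^ 2) * (T - 1) ≤ 2.129 * P ^ (m ^ 2) := by
    have : P ^ (m ^ 2) * T + P ^ (m ^ 2) * (T - 1) = (2 * T - 1) * P ^ (m ^ 2) := by ring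
    rw [this]
    apply mul_le_mul_of_nonneg_right _ hPm.le
    norm_num at hTb ⊢
    linarith
  linarith [hpart1, hpart2]
end

section
/- For every prime p and every odd integer a ≥ 6 (i.e., a ≥ 7 odd), ∑_{k=0}^a p^{k(a-k)} ≤ 2.53175 · p^{(a²-1)/4} ≤ 2.129 · p^{a²/4}. -/
theorem sum_pow_odd (p : ℕ) (hp : p.Prime) (a : ℕ) (hodd : Odd a) (ha : 6 ≤ a) :
    ∑ k ∈ Finset.range (a + 1), (p : ℝ) ^ (k * (a - k)) ≤
        2.53175 * (p : ℝ) ^ (((a : ℝ) ^ 2 - 1) / 4) ∧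
      2.53175 * (p : ℝ) ^ (((a : ℝ) ^ 2 - 1) / 4) ≤
        2.129 * (p : ℝ) ^ ((a : ℝ) ^ 2 / 4) := by
  obtain ⟨m, hm⟩ := hodd
  have hm3 : 3 ≤ m := by omega
  have hp2 : (2:ℝ) ≤ (p:ℝ) := by exact_mod_cast hp.two_le
  have hp0 : (0:ℝ) < (p:ℝ) := by linarith
  set M : ℕ := m * (m + 1) with hM
  have hexp : ((a : ℝ) ^ 2 - 1) / 4 = (M : ℝ) := by
    rw [hM]; subst hm; push_cast; ring
  have hrw : (p : ℝ) ^ (((a : ℝ) ^ 2 - 1) / 4) = (p:ℝ) ^ M := by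
    rw [hexp, Real.rpow_natCast]
  have hpMnn : (0:ℝ) ≤ (p:ℝ) ^ M := by positivity
  constructor
  · rw [hrw]
    -- split the sum in two symmetric halves
    have hsplit : ∑ k ∈ Finset.range (a+1), (p : ℝ) ^ (k * (a - k))
        = ∑ k ∈ Finset.range (m+1), (p : ℝ) ^ (k * (a - k))
          + ∑ k ∈ Finset.Ico (m+1) (a+1), (p : ℝ) ^ (k * (a - k)) :=
      (Finset.sum_range_add_sum_Ico _ (by omega)).symm
    have hsym : ∑ k ∈ Finset.Ico (m+1) (a+1), (p : ℝ) ^ (k * (a - k))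
        = ∑ k ∈ Finset.range (m+1), (p : ℝ) ^ (k * (a - k)) := by
      refine Finset.sum_nbij' (fun k => a - k) (fun k => a - k) ?_ ?_ ?_ ?_ ?_
      · intro k hk
        simp only [Finset.mem_Ico] at hk
        simp only [Finset.mem_range]
        omega
      · intro k hk
        simp only [Finset.mem_range] at hk
        simp only [Finset.mem_Ico]
        omega
      · intro k hk
        simp only [Finset.mem_Ico] at hk
        show a - (a - k) = k
        omega
      · intro k hk
        simp only [Finset.mem_range] at hk
        show a - (a - k) = k
        omega
      · intro k hk
        simp only [Finset.mem_Ico] at hk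
        congr 1
        have h1 : a - (a - k) = k := by omega
        rw [h1, Nat.mul_comm]
    have hhalf : ∑ k ∈ Finset.range (m+1), (p : ℝ) ^ (k * (a - k))
        = ∑ j ∈ Finset.range (m+1), (p : ℝ) ^ (M - j * (j + 1)) := by
      rw [← Finset.sum_range_reflect (fun j => (p : ℝ) ^ (j * (a - j))) (m+1)]
      refine Finset.sum_congr rfl ?_
      intro j hj
      simp only [Finset.mem_range] at hj
      congr 1
      have hj' : j ≤ m := by omega
      obtain ⟨d, rfl⟩ : ∃ d, m = j + d := ⟨m - j, by omega⟩
      have h1 : j + d + 1 - 1 - j = d := by omega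
      have h2 : a - d = 2 * j + d + 1 := by omega
      rw [h1, h2]
      symm
      apply Nat.sub_eq_of_eq_add
      rw [hM]; ring
    have hterm : ∀ j ∈ Finset.range (m+1),
        (p:ℝ) ^ (M - j * (j + 1)) ≤ (p:ℝ) ^ M * ((1:ℝ)/2) ^ (j * (j + 1)) := by
      intro j hj
      simp only [Finset.mem_range] at hj
      have hle : j * (j + 1) ≤ M := by
        rw [hM]; exact Nat.mul_le_mul (by omega) (by omega)
      have h2e : (0:ℝ) < 2 ^ (j * (j + 1)) := by positivity
      have key : (p:ℝ) ^ (M - j * (j + 1)) * 2 ^ (j * (j + 1)) ≤ (p:ℝ) ^ M := by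
        calc (p:ℝ) ^ (M - j * (j + 1)) * 2 ^ (j * (j + 1))
            ≤ (p:ℝ) ^ (M - j * (j + 1)) * (p:ℝ) ^ (j * (j + 1)) :=
              mul_le_mul_of_nonneg_left (pow_le_pow_left₀ (by norm_num) hp2 _) (by positivity)
          _ = (p:ℝ) ^ (M - j * (j + 1) + j * (j + 1)) := (pow_add _ _ _).symm
          _ = (p:ℝ) ^ M := by rw [Nat.sub_add_cancel hle]
      rw [show ((1:ℝ)/2) ^ (j * (j + 1)) = 1 / 2 ^ (j * (j + 1)) by
        rw [div_pow, one_pow], mul_one_div, le_div_iff₀ h2e]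
      exact key
    have hS : ∑ j ∈ Finset.range (m+1), ((1:ℝ)/2) ^ (j * (j + 1))
        ≤ 5185/4096 + 1/1015808 := by
      rw [← Finset.sum_range_add_sum_Ico _ (show 4 ≤ m + 1 by omega)]
      have hA : ∑ j ∈ Finset.range 4, ((1:ℝ)/2) ^ (j * (j + 1)) = 5185/4096 := by
        norm_num [Finset.sum_range_succ]
      have hB : ∑ j ∈ Finset.Ico 4 (m+1), ((1:ℝ)/2) ^ (j * (j + 1)) ≤ 1/1015808 := by
        calc ∑ j ∈ Finset.Ico 4 (m+1), ((1:ℝ)/2) ^ (j * (j + 1))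
            ≤ ∑ j ∈ Finset.Ico 4 (m+1), ((1:ℝ)/32) ^ j := by
              refine Finset.sum_le_sum ?_
              intro j hj
              simp only [Finset.mem_Ico] at hj
              have : ((1:ℝ)/32) ^ j = ((1:ℝ)/2) ^ (5 * j) := by
                rw [pow_mul]; norm_num
              rw [this]
              exact pow_le_pow_of_le_one (by norm_num) (by norm_num) (by nlinarith [hj.1])
          _ = (((1:ℝ)/32) ^ (m+1) - ((1:ℝ)/32) ^ 4) / ((1:ℝ)/32 - 1) :=
              geom_sum_Ico (by norm_num) (by omega)
          _ ≤ 1/1015808 := by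
              rw [div_le_iff_of_neg (by norm_num)]
              have h0 : (0:ℝ) ≤ ((1:ℝ)/32) ^ (m+1) := by positivity
              nlinarith [h0]
      linarith
    calc ∑ k ∈ Finset.range (a+1), (p : ℝ) ^ (k * (a - k))
        = 2 * ∑ j ∈ Finset.range (m+1), (p : ℝ) ^ (M - j * (j + 1)) := by
          rw [hsplit, hsym, hhalf]; ring
      _ ≤ 2 * ∑ j ∈ Finset.range (m+1), (p:ℝ) ^ M * ((1:ℝ)/2) ^ (j * (j + 1)) := by
          gcongr with j hj
          exact hterm j hj
      _ = 2 * ((p:ℝ) ^ M * ∑ j ∈ Finset.range (m+1), ((1:ℝ)/2) ^ (j * (j + 1))) := by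
          rw [← Finset.mul_sum]
      _ ≤ 2 * ((p:ℝ) ^ M * (5185/4096 + 1/1015808)) := by gcongr
      _ ≤ 2.53175 * (p:ℝ) ^ M := by nlinarith
  · rw [hrw]
    have hexp2 : (a : ℝ) ^ 2 / 4 = (M : ℝ) + 1/4 := by
      rw [hM]; subst hm; push_cast; ring
    rw [hexp2, Real.rpow_add hp0, Real.rpow_natCast]
    have h4 : (2:ℝ) ^ ((1:ℝ)/4) ≤ (p:ℝ) ^ ((1:ℝ)/4) :=
      Real.rpow_le_rpow (by norm_num) hp2 (by norm_num)
    have hc : (2.53175:ℝ) ≤ 2.129 * (2:ℝ) ^ ((1:ℝ)/4) := by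
      set c : ℝ := 2.53175/2.129 with hcdef
      have h1 : c ^ (4:ℕ) ≤ 2 := by rw [hcdef]; norm_num
      have h2 : c = (c ^ (4:ℕ)) ^ ((1:ℝ)/4) := by
        rw [← Real.rpow_natCast c 4, ← Real.rpow_mul (by rw [hcdef]; norm_num)]
        norm_num
      have h3 : (c ^ (4:ℕ)) ^ ((1:ℝ)/4) ≤ (2:ℝ) ^ ((1:ℝ)/4) :=
        Real.rpow_le_rpow (by positivity) h1 (by norm_num)
      have h5 : c ≤ (2:ℝ) ^ ((1:ℝ)/4) := by rw [h2]; exact h3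
      have h6 : 2.129 * c = 2.53175 := by rw [hcdef]; norm_num
      nlinarith [h5]
    have hfin : (2.53175:ℝ) ≤ 2.129 * (p:ℝ) ^ ((1:ℝ)/4) := le_trans hc (mul_le_mul_of_nonneg_left h4 (by norm_num))
    calc 2.53175 * (p:ℝ) ^ M ≤ (2.129 * (p:ℝ) ^ ((1:ℝ)/4)) * (p:ℝ) ^ M :=
          mul_le_mul_of_nonneg_right hfin hpMnn
      _ = 2.129 * ((p:ℝ) ^ M * (p:ℝ) ^ ((1:ℝ)/4)) := by ring
end

section
/- Let p ≥ 5 be a prime and let R be a finite group with cyclic Sylow p-subgroup P of order p such that the normalizer of P in R equals its centralizer. Then R has a normal subgroup N with R = NP and N ∩ P = 1, and if N has exactly x subgroups then R has at most x(1 + |R|/p) subgroups. -/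
open Subgroup

theorem burnside_complement_subgroup_bound (R : Type*) [Group R] [Finite R]
    (p : ℕ) (hp : p.Prime) (h5 : 5 ≤ p) (P : Sylow p R)
    (hcard : Nat.card P = p)
    (hNC : Subgroup.normalizer ((P : Subgroup R) : Set R) = Subgroup.centralizer (P : Set R)) :
    ∃ N : Subgroup R, N.Normal ∧ N ⊔ (P : Subgroup R) = ⊤ ∧
      N ⊓ (P : Subgroup R) = ⊥ ∧
      Nat.card (Subgroup R) ≤ Nat.card (Subgroup N) * (1 + Nat.card R / p) := by
  classical
  haveI : Fact p.Prime := ⟨hp⟩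
  have hP' : (Subgroup.normalizer ((P : Subgroup R) : Set R)) ≤ Subgroup.centralizer (P : Set R) := hNC.le
  set N : Subgroup R := (MonoidHom.transferSylow P hP').ker with hNdef
  have hcomp : IsComplement' N P := MonoidHom.ker_transferSylow_isComplement' P hP'
  have hNnormal : N.Normal := MonoidHom.normal_ker _
  have hmul : Nat.card N * p = Nat.card R := by
    simpa [hcard] using hcomp.card_mul
  have hpP : ¬ p ∣ Nat.card N := MonoidHom.not_dvd_card_ker_transferSylow P hP'
  have hcop : Nat.Coprime (Nat.card N) p := (hp.coprime_iff_not_dvd.mpr hpP).symm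
  -- every Sylow has card p
  have hcardQ : ∀ Q : Sylow p R, Nat.card Q = p := fun Q => by
    rw [Q.card_eq_multiplicity, ← P.card_eq_multiplicity, hcard]
  -- IsComplement' N Q for every Sylow Q
  have hcompQ : ∀ Q : Sylow p R, IsComplement' N Q := fun Q =>
    isComplement'_of_coprime (by rw [hcardQ Q, hmul]) (by rw [hcardQ Q]; exact hcop)
  -- key: if ↑Q ≤ H then H = (H ⊓ N) ⊔ ↑Q
  have key : ∀ (H : Subgroup R) (Q : Sylow p R), ↑Q ≤ H → (H ⊓ N) ⊔ (Q : Subgroup R) = H := by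
    intro H Q hQH
    refine le_antisymm (sup_le inf_le_left hQH) fun h hh => ?_
    obtain ⟨⟨n, q⟩, hnq⟩ := (hcompQ Q).2 h
    have hq : (q : R) ∈ H := hQH q.2
    have hn : (n : R) ∈ H ⊓ N := ⟨by
      have : (n : R) = h * (q : R)⁻¹ := by rw [← hnq]; group
      rw [this]; exact H.mul_mem hh (H.inv_mem hq), n.2⟩
    rw [← hnq]
    exact Subgroup.mul_mem_sup hn q.2
  -- existence of a Sylow inside H when H ≰ N
  have hex : ∀ H : Subgroup R, ¬ H ≤ N → ∃ Q : Sylow p R, ↑Q ≤ H := by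
    intro H hHN
    have hpH : p ∣ Nat.card H := by
      obtain ⟨x, hxH, hxN⟩ := SetLike.not_le_iff_exists.mp hHN
      have hindex : N.index = p := by
        rw [hcomp.symm.index_eq_card, hcard]
      have hMbot : H.map (QuotientGroup.mk' N) ≠ ⊥ := by
        intro hbot
        apply hxN
        have : QuotientGroup.mk' N x ∈ H.map (QuotientGroup.mk' N) :=
          Subgroup.mem_map_of_mem _ hxH
        rw [hbot, Subgroup.mem_bot] at this
        exact (QuotientGroup.eq_one_iff x).mp this
      have hdvd1 : Nat.card (H.map (QuotientGroup.mk' N)) ∣ p := by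
        have h1 := Subgroup.card_subgroup_dvd_card (H.map (QuotientGroup.mk' N))
        have h2 : Nat.card (R ⧸ N) = p := by rw [← hindex]; rfl
        rwa [h2] at h1
      have hne1 : Nat.card (H.map (QuotientGroup.mk' N)) ≠ 1 := by
        intro h1
        exact hMbot (Subgroup.card_eq_one.mp h1)
      have hMp : Nat.card (H.map (QuotientGroup.mk' N)) = p :=
        ((Nat.Prime.eq_one_or_self_of_dvd hp _ hdvd1).resolve_left hne1)
      have hsurj := (QuotientGroup.mk' N).subgroupMap_surjective H
      have := Subgroup.card_dvd_of_surjective _ hsurj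
      rw [hMp] at this
      exact this
    haveI : Fintype H := Fintype.ofFinite H
    rw [Nat.card_eq_fintype_card] at hpH
    obtain ⟨x, hx⟩ := exists_prime_orderOf_dvd_card (G := H) p hpH
    have hxord : orderOf (x : R) = p := by
      rw [← hx]; exact orderOf_injective H.subtype H.subtype_injective x
    have hzcard : Nat.card (Subgroup.zpowers (x : R)) = p := by
      rw [Nat.card_zpowers, hxord]
    have hzp : IsPGroup p (Subgroup.zpowers (x : R)) :=
      IsPGroup.of_card (by rw [hzcard, pow_one])
    obtain ⟨Q, hQ⟩ := hzp.exists_le_sylow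
    have : Subgroup.zpowers (x : R) = ↑Q :=
      Subgroup.eq_of_le_of_card_ge hQ (by rw [hcardQ Q, hzcard])
    refine ⟨Q, ?_⟩
    rw [← this]
    exact Subgroup.zpowers_le.mpr x.2
  -- the injection
  have hsub : ∀ {H : Subgroup R}, H ≤ N → ((H.subgroupOf N).map N.subtype = H) := by
    intro H hH
    rw [Subgroup.subgroupOf_map_subtype, inf_eq_left.mpr hH]
  let f : Subgroup R → Subgroup N × Option (Sylow p R) := fun H =>
    if h : H ≤ N then (H.subgroupOf N, none)
    else ((H ⊓ N).subgroupOf N, some (hex H h).choose)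
  have hfinj : Function.Injective f := by
    intro H₁ H₂ hf
    simp only [f] at hf
    by_cases h1 : H₁ ≤ N <;> by_cases h2 : H₂ ≤ N
    · rw [dif_pos h1, dif_pos h2, Prod.mk.injEq] at hf
      rw [← hsub h1, ← hsub h2, hf.1]
    · rw [dif_pos h1, dif_neg h2, Prod.mk.injEq] at hf
      exact absurd hf.2 (by simp)
    · rw [dif_neg h1, dif_pos h2, Prod.mk.injEq] at hf
      exact absurd hf.2 (by simp)
    · rw [dif_neg h1, dif_neg h2, Prod.mk.injEq] at hf
      have hinf : H₁ ⊓ N = H₂ ⊓ N := by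
        have := congrArg (Subgroup.map N.subtype) hf.1
        rwa [Subgroup.subgroupOf_map_subtype, Subgroup.subgroupOf_map_subtype,
          inf_assoc, inf_idem, inf_assoc, inf_idem] at this
      have hQ : (hex H₁ h1).choose = (hex H₂ h2).choose := Option.some_injective _ hf.2
      rw [← key H₁ _ (hex H₁ h1).choose_spec, hinf, hQ, key H₂ _ (hex H₂ h2).choose_spec]
  -- counting
  haveI : Finite (Subgroup N) := by infer_instance
  haveI : Finite (Subgroup R) := by infer_instance
  haveI : Finite (Sylow p R) := by infer_instance
  haveI := Fintype.ofFinite (Sylow p R)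
  have hcount : Nat.card (Subgroup R) ≤ Nat.card (Subgroup N) * (1 + Nat.card (Sylow p R)) := by
    calc Nat.card (Subgroup R) ≤ Nat.card (Subgroup N × Option (Sylow p R)) :=
          Nat.card_le_card_of_injective f hfinj
      _ = Nat.card (Subgroup N) * (1 + Nat.card (Sylow p R)) := by
          rw [Nat.card_prod, Finite.card_option]; ring
  have hsylow : Nat.card (Sylow p R) ≤ Nat.card R / p := by
    rw [Sylow.card_eq_index_normalizer P]
    have hple : p ∣ Nat.card (Subgroup.normalizer ((P : Subgroup R) : Set R)) := by
      have := Subgroup.card_dvd_of_le (Subgroup.le_normalizer (H := (P : Subgroup R)))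
      rwa [hcard] at this
    obtain ⟨k, hk⟩ := hple
    have hmulidx : Nat.card (Subgroup.normalizer ((P : Subgroup R) : Set R)) * (Subgroup.normalizer ((P : Subgroup R) : Set R)).index
        = Nat.card R := Subgroup.card_mul_index _
    rw [Nat.le_div_iff_mul_le hp.pos, ← hmulidx, hk]
    have hk0 : 0 < k := by
      rcases Nat.eq_zero_or_pos k with h | h
      · exfalso; rw [h, mul_zero] at hk
        exact (Nat.card_pos (α := (Subgroup.normalizer ((P : Subgroup R) : Set R)))).ne' hk
      · exact h
    calc (Subgroup.normalizer ((P : Subgroup R) : Set R)).index * p ≤ (Subgroup.normalizer ((P : Subgroup R) : Set R)).index * p * k :=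
          Nat.le_mul_of_pos_right _ hk0
      _ = p * k * (Subgroup.normalizer ((P : Subgroup R) : Set R)).index := by ring
  refine ⟨N, hNnormal, hcomp.sup_eq_top, hcomp.disjoint.eq_bot, ?_⟩
  calc Nat.card (Subgroup R) ≤ Nat.card (Subgroup N) * (1 + Nat.card (Sylow p R)) := hcount
    _ ≤ Nat.card (Subgroup N) * (1 + Nat.card R / p) := by
        have := Nat.card_pos (α := Subgroup N)
        exact Nat.mul_le_mul_left _ (by omega)
end

section
/- Let R be a finite group of order r = ∏_{i=1}^ℓ p_i^{a_i} (distinct primes p_i), and for each i let S_i be an upper bound on the number of subgroups of any group of order p_i^{a_i}. Then R has at most r^{ℓ-1} · ∏_{i=1}^ℓ S_i subgroups. -/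
theorem aux_transfer {S : ℕ → ℕ} {p m : ℕ}
    (h : ∀ (P : Type) [Group P], Nat.card P = p ^ m → Nat.card (Subgroup P) ≤ S p)
    (G : Type*) [Group G] [Finite G] (hG : Nat.card G = p ^ m) :
    Nat.card (Subgroup G) ≤ S p := by
  let e : Fin (Nat.card G) ≃ G := (Finite.equivFin G).symm
  letI : Group (Fin (Nat.card G)) := e.group
  have h1 : Nat.card (Subgroup G) = Nat.card (Subgroup (Fin (Nat.card G))) :=
    Nat.card_congr (e.mulEquiv.comapSubgroup).toEquiv
  rw [h1]
  refine h _ ?_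
  rw [Nat.card_eq_fintype_card, Fintype.card_fin, hG]

theorem eq_iSup_of_sylow {R : Type*} [Group R] [Finite R]
    (H : Subgroup R) (Q : {p // p ∈ (Nat.card R).primeFactors} → Subgroup R)
    (hle : ∀ p, Q p ≤ H)
    (hcard : ∀ p, Nat.card (Q p) = (p : ℕ) ^ ((Nat.card H).factorization (p : ℕ))) :
    H = ⨆ p, Q p := by
  have hKle : (⨆ p, Q p) ≤ H := iSup_le hle
  have h0 : Nat.card ↥(⨆ p, Q p) ≠ 0 := Nat.card_pos.ne'
  have hdvd : Nat.card H ∣ Nat.card ↥(⨆ p, Q p) := by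
    rw [← Nat.factorization_le_iff_dvd Nat.card_pos.ne' h0]
    intro p
    by_cases hp : (Nat.card H).factorization p = 0
    · simp [hp]
    · have hmem : p ∈ (Nat.card H).primeFactors := by
        rw [← Nat.support_factorization]; exact Finsupp.mem_support_iff.mpr hp
      have hps : p ∈ (Nat.card R).primeFactors :=
        Nat.primeFactors_mono H.card_subgroup_dvd_card Nat.card_pos.ne' hmem
      have hd : Nat.card (Q ⟨p, hps⟩) ∣ Nat.card ↥(⨆ p, Q p) :=
        Subgroup.card_dvd_of_le (le_iSup Q ⟨p, hps⟩)
      rw [hcard ⟨p, hps⟩] at hd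
      exact (Nat.Prime.pow_dvd_iff_le_factorization
        (Nat.prime_of_mem_primeFactors hmem) h0).mp hd
  exact (Subgroup.eq_of_le_of_card_ge hKle (Nat.le_of_dvd Nat.card_pos hdvd)).symm

theorem subgroup_count_sylow_bound (R : Type*) [Group R] [Finite R]
    (S : ℕ → ℕ)
    (hS : ∀ p : ℕ, p.Prime → ∀ (P : Type) [Group P],
      Nat.card P = p ^ ((Nat.card R).factorization p) →
        Nat.card (Subgroup P) ≤ S p) :
    Nat.card (Subgroup R) ≤
      (Nat.card R) ^ ((Nat.card R).primeFactors.card - 1) *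
        ∏ p ∈ (Nat.card R).primeFactors, S p := by
  classical
  by_cases hr1 : Nat.card R = 1
  · haveI : Subsingleton R := (Nat.card_eq_one_iff_unique.mp hr1).1
    haveI : Subsingleton (Subgroup R) := by
      constructor
      intro a b
      ext x
      rw [Subsingleton.elim x (1 : R)]
      exact iff_of_true (one_mem a) (one_mem b)
    have h1 : Nat.card (Subgroup R) = 1 :=
      Nat.card_eq_one_iff_unique.mpr ⟨inferInstance, ⟨⊥⟩⟩
    rw [h1, hr1]
    simp
  · have hr0 : Nat.card R ≠ 0 := Nat.card_pos.ne'
    -- choose representatives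
    have hex : ∀ (H : Subgroup R) (p : {q // q ∈ (Nat.card R).primeFactors}),
        ∃ (P : Sylow (p : ℕ) R) (Q : Subgroup R),
        Q ≤ (P : Subgroup R) ∧ Q ≤ H ∧
        Nat.card Q = (p : ℕ) ^ ((Nat.card H).factorization (p : ℕ)) := by
      intro H p
      haveI : Fact (p : ℕ).Prime := ⟨Nat.prime_of_mem_primeFactors p.2⟩
      obtain ⟨Q0⟩ : Nonempty (Sylow (p : ℕ) ↥H) := inferInstance
      have hpg : IsPGroup (p : ℕ) ((Q0 : Subgroup ↥H).map H.subtype) :=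
        Q0.isPGroup'.map _
      obtain ⟨P, hP⟩ := hpg.exists_le_sylow
      refine ⟨P, _, hP, Subgroup.map_subtype_le _, ?_⟩
      rw [← Nat.card_congr (Subgroup.equivMapOfInjective (Q0 : Subgroup ↥H) H.subtype
        H.subtype_injective).toEquiv]
      exact Q0.card_eq_multiplicity
    choose Psy Qsub hQP hQH hQcard using hex
    have Finj : Function.Injective
        (fun (H : Subgroup R) (p : {q // q ∈ (Nat.card R).primeFactors}) =>
          (⟨Psy H p, (Qsub H p).subgroupOf (Psy H p : Subgroup R)⟩ :
            Σ P : Sylow (p : ℕ) R, Subgroup ↥(P : Subgroup R))) := by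
      intro H K hHK
      have hQ : ∀ p, Qsub H p = Qsub K p := by
        intro p
        have h1 := congrFun hHK p
        have h2 := congrArg
          (fun s : Σ P : Sylow (p : ℕ) R, Subgroup ↥(P : Subgroup R) =>
            Subgroup.map (s.1 : Subgroup R).subtype s.2) h1
        simpa [inf_of_le_left (hQP H p), inf_of_le_left (hQP K p)] using h2
      rw [eq_iSup_of_sylow H (Qsub H) (hQH H) (hQcard H),
          eq_iSup_of_sylow K (Qsub K) (hQH K) (hQcard K)]
      exact iSup_congr hQ
    haveI hSylFin : ∀ (p : ℕ), Finite (Sylow p R) := fun p =>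
      Finite.of_injective (fun P : Sylow p R => (P : Subgroup R))
        (fun _ _ h => Sylow.ext h)
    have hcount : ∀ p : {q // q ∈ (Nat.card R).primeFactors},
        Nat.card (Σ P : Sylow (p : ℕ) R, Subgroup ↥(P : Subgroup R)) ≤
          (Nat.card R / (p : ℕ) ^ ((Nat.card R).factorization (p : ℕ))) * S p := by
      intro p
      haveI hfact : Fact (p : ℕ).Prime := ⟨Nat.prime_of_mem_primeFactors p.2⟩
      haveI := Fintype.ofFinite (Sylow (p : ℕ) R)
      haveI : ∀ P : Sylow (p : ℕ) R, Fintype (Subgroup ↥(P : Subgroup R)) :=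
        fun _ => Fintype.ofFinite _
      rw [Nat.card_eq_fintype_card, Fintype.card_sigma]
      have hb : ∀ P : Sylow (p : ℕ) R, Fintype.card (Subgroup ↥(P : Subgroup R)) ≤ S p := by
        intro P
        rw [← Nat.card_eq_fintype_card]
        exact aux_transfer (hS p hfact.out) _ P.card_eq_multiplicity
      calc ∑ P : Sylow (p : ℕ) R, Fintype.card (Subgroup ↥(P : Subgroup R))
          ≤ ∑ _P : Sylow (p : ℕ) R, S p := Finset.sum_le_sum (fun P _ => hb P)
        _ = Fintype.card (Sylow (p : ℕ) R) * S p := by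
            rw [Finset.sum_const, Finset.card_univ, smul_eq_mul]
        _ ≤ (Nat.card R / (p : ℕ) ^ ((Nat.card R).factorization (p : ℕ))) * S p := by
            apply Nat.mul_le_mul_right
            obtain ⟨P⟩ : Nonempty (Sylow (p : ℕ) R) := inferInstance
            have hdvd := P.card_dvd_index
            have h1 := Subgroup.card_mul_index (P : Subgroup R)
            rw [P.card_eq_multiplicity] at h1
            have hidx : (P : Subgroup R).index =
                Nat.card R / (p : ℕ) ^ ((Nat.card R).factorization (p : ℕ)) := by
              exact (Nat.div_eq_of_eq_mul_right (pow_pos hfact.out.pos _) h1.symm).symm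
            rw [← Nat.card_eq_fintype_card, ← hidx]
            refine Nat.le_of_dvd ?_ hdvd
            rcases Nat.eq_zero_or_pos (P : Subgroup R).index with h | h
            · rw [h, mul_zero] at h1; exact absurd h1.symm hr0
            · exact h
    have hmain : Nat.card (Subgroup R) ≤
        ∏ p ∈ (Nat.card R).primeFactors,
          (Nat.card R / p ^ ((Nat.card R).factorization p)) * S p := by
      calc Nat.card (Subgroup R)
          ≤ Nat.card (∀ p : {q // q ∈ (Nat.card R).primeFactors},
              Σ P : Sylow (p : ℕ) R, Subgroup ↥(P : Subgroup R)) :=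
            Nat.card_le_card_of_injective _ Finj
        _ = ∏ p : {q // q ∈ (Nat.card R).primeFactors},
              Nat.card (Σ P : Sylow (p : ℕ) R, Subgroup ↥(P : Subgroup R)) := Nat.card_pi
        _ ≤ ∏ p : {q // q ∈ (Nat.card R).primeFactors},
              (Nat.card R / (p : ℕ) ^ ((Nat.card R).factorization (p : ℕ))) * S p :=
            Finset.prod_le_prod' (fun i _ => hcount i)
        _ = ∏ p ∈ (Nat.card R).primeFactors,
              (Nat.card R / p ^ ((Nat.card R).factorization p)) * S p :=
            Finset.prod_coe_sort (Nat.card R).primeFactors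
              (fun p => Nat.card R / p ^ ((Nat.card R).factorization p) * S p)
    have hℓ : 1 ≤ (Nat.card R).primeFactors.card := by
      refine Finset.card_pos.mpr (Nat.nonempty_primeFactors.mpr ?_)
      omega
    have hr' : ∏ p ∈ (Nat.card R).primeFactors, p ^ ((Nat.card R).factorization p)
        = Nat.card R := by
      rw [show (∏ p ∈ (Nat.card R).primeFactors, p ^ ((Nat.card R).factorization p))
        = (Nat.card R).factorization.prod (· ^ ·) from rfl]
      exact Nat.factorization_prod_pow_eq_self hr0
    have hprod : (∏ p ∈ (Nat.card R).primeFactors,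
        Nat.card R / p ^ ((Nat.card R).factorization p)) =
        Nat.card R ^ ((Nat.card R).primeFactors.card - 1) := by
      have h2 : (∏ p ∈ (Nat.card R).primeFactors,
          Nat.card R / p ^ ((Nat.card R).factorization p)) *
          (∏ p ∈ (Nat.card R).primeFactors, p ^ ((Nat.card R).factorization p)) =
          ∏ _p ∈ (Nat.card R).primeFactors, Nat.card R := by
        rw [← Finset.prod_mul_distrib]
        exact Finset.prod_congr rfl (fun p _ => Nat.div_mul_cancel (Nat.ordProj_dvd _ p))
      rw [hr', Finset.prod_const] at h2
      have h3 : Nat.card R ^ (Nat.card R).primeFactors.card =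
          Nat.card R ^ ((Nat.card R).primeFactors.card - 1) * Nat.card R := by
        rw [← pow_succ, Nat.sub_add_cancel hℓ]
      rw [h3] at h2
      exact Nat.eq_of_mul_eq_mul_right Nat.card_pos h2
    refine hmain.trans (le_of_eq ?_)
    rw [Finset.prod_mul_distrib, hprod]
end
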